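/- arXiv:1711.05527 — 2 statements merged into one kernel-verified Lean document; each statement's English description precedes it below -/
import Mathlib

section
/- Let T be an infinite, locally finite rooted tree that is weakly uniformly transient. Then λ ↦ C(λ,T) is left continuous on (λ_c(T), 1]. -/
open scoped Classical ENNReal
open Filter

/-- A rooted tree with vertex labels in `A`, modeled as a set of finite words over `A`
closed under taking initial segments. The root is the empty word `[]`, and the children
of a vertex `v` are the words `v ++ [a]` belonging to the tree. -/
structure RTree (A : Type*) where
  mem : Set (List A)
  root_mem : [] ∈ mem
  parent_mem : ∀ (v : List A) (a : A), v ++ [a] ∈ mem → v ∈ mem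

namespace RTree

variable {A : Type*}

/-- The tree is locally finite: every vertex has finitely many children. -/
def LocFin (T : RTree A) : Prop := ∀ v ∈ T.mem, {a : A | v ++ [a] ∈ T.mem}.Finite

/-- Number of children of a vertex. -/
noncomputable def numChildren (T : RTree A) (v : List A) : ℕ :=
  {a : A | v ++ [a] ∈ T.mem}.ncard

/-- Degree of a vertex (number of children, plus one for the parent except at the root). -/
noncomputable def degree (T : RTree A) (v : List A) : ℕ :=
  T.numChildren v + (if v = [] then 0 else 1)

/-- Number of vertices at generation `n`. -/
noncomputable def levelCard (T : RTree A) (n : ℕ) : ℕ :=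
  {v ∈ T.mem | v.length = n}.ncard

/-- The subtree of descendants of `y`, rooted at `y`. -/
def subtree (T : RTree A) (y : List A) : RTree A where
  mem := insert [] {l : List A | y ++ l ∈ T.mem}
  root_mem := Set.mem_insert _ _
  parent_mem := by
    intro v a hv
    rw [Set.mem_insert_iff] at hv
    rcases hv with h | h
    · exact absurd h (by simp)
    · exact Set.mem_insert_iff.mpr <| Or.inr <|
        T.parent_mem (y ++ v) a (by simpa [List.append_assoc] using h)

/-- One-step transition probabilities of the `λ`-biased random walk `RW_λ`:
from a non-root vertex with `k` children, move to the parent with probability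
`1/(1+kλ)` and to each child with probability `λ/(1+kλ)`; from the root, move
to each of its children with equal probability. -/
noncomputable def step (T : RTree A) (lam : ℝ) (x y : List A) : ℝ :=
  if x ∈ T.mem ∧ y ∈ T.mem then
    if ∃ a : A, y = x ++ [a] then
      if x = [] then 1 / (T.numChildren x : ℝ)
      else lam / (1 + (T.numChildren x : ℝ) * lam)
    else if x ≠ [] ∧ y = x.dropLast then 1 / (1 + (T.numChildren x : ℝ) * lam)
    else 0
  else 0

/-- Probability of a finite trajectory (product of one-step transition probabilities). -/
noncomputable def pathProb (T : RTree A) (lam : ℝ) : List (List A) → ℝ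
  | [] => 1
  | [_] => 1
  | x :: y :: r => T.step lam x y * pathProb T lam (y :: r)

/-- Probability that the walk started at the root satisfies the constraint `P i` at
every time `0 ≤ i ≤ M`. -/
noncomputable def cylProb (T : RTree A) (lam : ℝ) (M : ℕ) (P : ℕ → List A → Prop) : ℝ :=
  ∑' l : {l : List (List A) // l.length = M + 1 ∧ l.head? = some ([] : List A) ∧
      ∀ (i : ℕ) (h : i < l.length), P i (l.get ⟨i, h⟩)},
    T.pathProb lam l.1

/-- Probability that the walk started at the root never returns to the root
(the decreasing limit over `M` of the probabilities of no return up to time `M`). -/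
noncomputable def escProb (T : RTree A) (lam : ℝ) : ℝ :=
  ⨅ M : ℕ, T.cylProb lam M fun i v => i ≠ 0 → v ≠ []

/-- Probability that the walk started at the root moves to `y` at its first step and
never returns to the root. -/
noncomputable def escProbVia (T : RTree A) (lam : ℝ) (y : List A) : ℝ :=
  ⨅ M : ℕ, T.cylProb lam M fun i v => (i ≠ 0 → v ≠ []) ∧ (i = 1 → v = y)

/-- `RW_λ` is recurrent: started at the root, it returns to the root almost surely. -/
def Recurrent (T : RTree A) (lam : ℝ) : Prop := T.escProb lam = 0

/-- `RW_λ` is transient: started at the root, it fails to return with positive probability. -/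
def Transient (T : RTree A) (lam : ℝ) : Prop := 0 < T.escProb lam

/-- Effective conductance `C(λ,T) = λ·deg(o)·P(no return to the root)`. -/
noncomputable def conductance (T : RTree A) (lam : ℝ) : ℝ :=
  lam * (T.numChildren ([] : List A) : ℝ) * T.escProb lam

/-- Law of the limit walk: `phi T lam y` is the probability that the walk eventually
stays in the subtree above `y`, i.e. that the limit walk `ω_λ^∞` passes through `y`
(equivalently, `ω_λ^∞(i) = y.take i` for all `i ≤ y.length`). -/
noncomputable def phi (T : RTree A) (lam : ℝ) (y : List A) : ℝ :=
  ⨆ N : ℕ, ⨅ M : ℕ, T.cylProb lam (N + M) fun i v => N ≤ i → y <+: v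

/-- An infinite simple path from the root. -/
def IsRay (T : RTree A) (r : ℕ → List A) : Prop :=
  r 0 = [] ∧ ∀ n, r n ∈ T.mem ∧ ∃ a : A, r (n + 1) = r n ++ [a]

/-- An edge-cutset, each edge being recorded by its endpoint farther from the root:
every infinite simple path from the root uses one of these edges. -/
def IsECutset (T : RTree A) (c : Set (List A)) : Prop :=
  (∀ v ∈ c, v ∈ T.mem ∧ v ≠ []) ∧ ∀ r, T.IsRay r → ∃ n, r (n + 1) ∈ c

/-- A vertex-cutset: every infinite simple path from the root meets it. -/
def IsVCutset (T : RTree A) (c : Set (List A)) : Prop :=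
  (∀ v ∈ c, v ∈ T.mem) ∧ ∀ r, T.IsRay r → ∃ n, r n ∈ c

/-- The branching number `br(T) = sup {λ ≥ 1 : inf over cutsets c of Σ_{e∈c} λ^{-|e|} > 0}`. -/
noncomputable def br (T : RTree A) : ℝ :=
  sSup {lam : ℝ | 1 ≤ lam ∧
    0 < ⨅ (c : Set (List A)) (_ : T.IsECutset c),
      ∑' e : c, ENNReal.ofReal (lam⁻¹ ^ (e : List A).length)}

/-- The critical parameter `λ_c(T) = 1 / br(T)`. -/
noncomputable def lambdaC (T : RTree A) : ℝ := 1 / T.br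

/-- Spherically symmetric tree: the degree of a vertex depends only on its generation. -/
def SphSymm (T : RTree A) : Prop :=
  ∀ v ∈ T.mem, ∀ w ∈ T.mem, v.length = w.length → T.numChildren v = T.numChildren w

/-- Uniformly transient tree. -/
def UniformlyTransient (T : RTree A) : Prop :=
  ∀ lam : ℝ, T.lambdaC < lam → ∃ α > (0 : ℝ), ∀ v ∈ T.mem, α ≤ (T.subtree v).escProb lam

/-- Weakly uniformly transient tree. -/
def WeaklyUniformlyTransient (T : RTree A) : Prop :=
  ∃ c : ℕ → Set (List A),
    (∀ n, T.IsVCutset (c n) ∧ (c n).Finite) ∧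
    (Pairwise fun i j => Disjoint (c i) (c j)) ∧
    ∀ lam : ℝ, T.lambdaC < lam → ∃ α > (0 : ℝ), ∀ n, ∀ v ∈ c n, α ≤ (T.subtree v).escProb lam

/-- Vertices of the periodic tree `T^{∞,F}` obtained by repeatedly grafting a copy of
the finite tree `F` at every leaf: a word belongs to it iff it is a concatenation of
root-to-leaf words of `F` followed by a word of `F`. -/
inductive GraftMem (F : RTree A) : List A → Prop
  | base (v : List A) (hv : v ∈ F.mem) : GraftMem F v
  | graft (v w : List A) (hv : v ∈ F.mem) (hne : v ≠ []) (hleaf : F.numChildren v = 0)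
      (hw : GraftMem F w) : GraftMem F (v ++ w)

/-- The periodic tree `T^{∞,F}`. -/
def periodicTree (F : RTree A) : RTree A where
  mem := {l | GraftMem F l}
  root_mem := GraftMem.base [] F.root_mem
  parent_mem := by
    have H : ∀ l, GraftMem F l → ∀ (v : List A) (a : A), l = v ++ [a] → GraftMem F v := by
      intro l hl
      induction hl with
      | base v hv =>
          intro u a h
          subst h
          exact GraftMem.base u (F.parent_mem u a hv)
      | graft v w hv hne hleaf hw ih =>
          intro u a h
          rcases w.eq_nil_or_concat' with hwnil | ⟨w', b, hww⟩
          · subst hwnil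
            rw [List.append_nil] at h
            subst h
            exact GraftMem.base u (F.parent_mem u a hv)
          · subst hww
            rw [← List.append_assoc] at h
            have h2 := congrArg List.dropLast h
            simp only [List.dropLast_concat] at h2
            subst h2
            exact GraftMem.graft v w' hv hne hleaf (ih w' b rfl)
    exact fun v a hva => H (v ++ [a]) hva v a rfl

end RTree

/-- The class `A_m` of infinite, locally finite, spherically symmetric rooted trees
all of whose vertices have degree at most `m`. -/
def MemAm (m : ℕ) (T : RTree ℕ) : Prop :=
  T.mem.Infinite ∧ T.LocFin ∧ T.SphSymm ∧ ∀ v ∈ T.mem, T.degree v ≤ m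

/-- The set `F_m` of effective-conductance functions of trees in `A_m`. -/
def Fm (m : ℕ) : Set (ℝ → ℝ) :=
  {f | ContinuousOn f (Set.Icc 0 1) ∧
    ∃ T : RTree ℕ, MemAm m T ∧ ∀ lam ∈ Set.Ioc (0 : ℝ) 1, f lam = T.conductance lam}

namespace SAW

/-- Nearest-neighbour adjacency on `ℤ²`. -/
def Adj (x y : ℤ × ℤ) : Prop :=
  (x.1 = y.1 ∧ (x.2 = y.2 + 1 ∨ x.2 + 1 = y.2)) ∨
  (x.2 = y.2 ∧ (x.1 = y.1 + 1 ∨ x.1 + 1 = y.1))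

/-- `l` is the list of successive positions, after the origin, of a self-avoiding
walk starting at the origin and staying in the region `S`. -/
def SAWIn (S : Set (ℤ × ℤ)) (l : List (ℤ × ℤ)) : Prop :=
  List.Chain' Adj ((0, 0) :: l) ∧ ((0, 0) :: l).Nodup ∧ ∀ p ∈ l, p ∈ S

/-- The self-avoiding tree of the region `S`: its vertices are the finite
self-avoiding walks in `S` starting at the origin, two walks being adjacent when
one is a one-step extension of the other. -/
def sawTree (S : Set (ℤ × ℤ)) : RTree (ℤ × ℤ) where
  mem := {l | SAWIn S l}
  root_mem := by exact ⟨List.isChain_singleton _, List.nodup_singleton _, by simp⟩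
  parent_mem := by
    intro v a hv
    obtain ⟨h1, h2, h3⟩ := hv
    have hpre : ((0, 0) :: v) <+: ((0, 0) :: (v ++ [a])) := ⟨[a], by simp⟩
    refine ⟨?_, h2.sublist hpre.sublist, fun p hp => h3 p (by simp [hp])⟩
    have h1' : (((0, 0) :: v) ++ [a]).Chain' Adj := by simpa using h1
    exact (List.isChain_append.mp h1').1

/-- The upper half-plane `ℍ = ℤ × ℤ_{≥0}`. -/
def HH : Set (ℤ × ℤ) := {z | 0 ≤ z.2}

/-- The quadrant `ℚ = ℤ_{≥0} × ℤ_{≥0}`. -/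
def QQ : Set (ℤ × ℤ) := {z | 0 ≤ z.1 ∧ 0 ≤ z.2}

/-- Number of self-avoiding walks of length `n` in `ℤ²` starting at the origin. -/
noncomputable def cSAW (n : ℕ) : ℕ :=
  {l : List (ℤ × ℤ) | l.length = n ∧ SAWIn Set.univ l}.ncard

/-- The connective constant `μ = lim cₙ^{1/n}` of `ℤ²`; by Fekete's subadditive lemma
the limit exists and equals the infimum over `n ≥ 1` of `cₙ^{1/n}`. -/
noncomputable def mu : ℝ := ⨅ n : ℕ, (cSAW (n + 1) : ℝ) ^ (((n : ℝ) + 1)⁻¹)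

/-- Endpoint in `ℤ²` of the finite self-avoiding walk recorded by `l`. -/
def endpt (l : List (ℤ × ℤ)) : ℤ × ℤ := l.getLast?.getD (0, 0)

/-- `l` is a bridge of the horizontal strip `{z : 0 ≤ Im z ≤ ℓ}`: a self-avoiding
walk of the strip starting at the origin with `γ₁(0) < γ₁(i) ≤ γ₁(n)` for `1 ≤ i ≤ n`. -/
def IsStripBridge (width : ℕ) (l : List (ℤ × ℤ)) : Prop :=
  SAWIn {z : ℤ × ℤ | 0 ≤ z.2 ∧ z.2 ≤ (width : ℤ)} l ∧
  ∀ p ∈ l, 0 < p.1 ∧ p.1 ≤ (endpt l).1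

/-- `p^{(ℓ)}_n`, the number of `n`-step bridges of the strip of width `ℓ`. -/
noncomputable def stripBridgeCount (width n : ℕ) : ℕ :=
  {l : List (ℤ × ℤ) | l.length = n ∧ IsStripBridge width l}.ncard

end SAW

namespace RTree

section Basics

variable {A : Type*} (T : RTree A) (hT : T.LocFin)

lemma concat_self {x : List A} (hne : x ≠ []) : x.dropLast ++ [x.getLast hne] = x :=
  List.dropLast_append_getLast hne

lemma parent_mem' {x : List A} (hx : x ∈ T.mem) (hne : x ≠ []) : x.dropLast ∈ T.mem := by
  apply T.parent_mem x.dropLast (x.getLast hne)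
  rw [concat_self]; exact hx

lemma prefix_mem : ∀ {v : List A}, v ∈ T.mem → ∀ {u : List A}, u <+: v → u ∈ T.mem := by
  intro v
  induction v using List.reverseRecOn with
  | nil => intro hv u hu; rwa [List.prefix_nil.mp hu]
  | append_singleton w a ih =>
      intro hv u hu
      rcases eq_or_ne u (w ++ [a]) with rfl | hne
      · exact hv
      · have hlen : u.length ≤ w.length := by
          have h1 := hu.length_le
          simp only [List.length_append, List.length_singleton] at h1
          rcases Nat.lt_or_ge u.length (w.length + 1) with h | h
          · omega
          · exfalso
            have := List.prefix_iff_eq_take.mp hu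
            rw [List.take_of_length_le (by simpa using h)] at this
            exact hne this
        have huw : u <+: w := by
          have hw : w <+: w ++ [a] := ⟨[a], rfl⟩
          exact List.prefix_of_prefix_length_le hu hw hlen
        exact ih (T.parent_mem w a hv) huw

noncomputable def childF (x : List A) : Finset (List A) :=
  if hx : x ∈ T.mem then ((hT x hx).toFinset.image (fun a => x ++ [a])) else ∅

lemma mem_childF {x y : List A} :
    y ∈ childF T hT x ↔ x ∈ T.mem ∧ ∃ a : A, x ++ [a] ∈ T.mem ∧ y = x ++ [a] := by
  unfold childF
  split
  · rename_i hx
    simp only [Finset.mem_image, Set.Finite.mem_toFinset, Set.mem_setOf_eq]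
    constructor
    · rintro ⟨a, ha, rfl⟩; exact ⟨hx, a, ha, rfl⟩
    · rintro ⟨-, a, ha, rfl⟩; exact ⟨a, ha, rfl⟩
  · rename_i hx
    simp only [Finset.notMem_empty, false_iff]
    rintro ⟨hx', -⟩; exact hx hx'

lemma childF_card {x : List A} (hx : x ∈ T.mem) :
    (childF T hT x).card = T.numChildren x := by
  unfold childF numChildren
  rw [dif_pos hx, Finset.card_image_of_injective, Set.ncard_eq_toFinset_card _ (hT x hx)]
  intro a b hab
  simpa using List.append_cancel_left hab

lemma mem_of_mem_childF {x y : List A} (h : y ∈ childF T hT x) : y ∈ T.mem := by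
  rcases (mem_childF T hT).mp h with ⟨-, a, ha, rfl⟩; exact ha

noncomputable def nbrF (x : List A) : Finset (List A) :=
  childF T hT x ∪ (if x = [] then ∅ else {x.dropLast})

lemma mem_of_mem_nbrF {x y : List A} (hx : x ∈ T.mem) (h : y ∈ nbrF T hT x) : y ∈ T.mem := by
  unfold nbrF at h
  rcases Finset.mem_union.mp h with h | h
  · exact mem_of_mem_childF T hT h
  · split at h
    · simp at h
    · rename_i hne
      rw [Finset.mem_singleton] at h
      subst h
      exact parent_mem' T hx hne

end Basics

end RTree
namespace RTree

section StepLemmas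

variable {A : Type*} (T : RTree A) (hT : T.LocFin) (p : ℝ)

lemma numChildren_pos_real (hp : 0 ≤ p) (x : List A) :
    (0:ℝ) < 1 + (T.numChildren x : ℝ) * p := by positivity

lemma step_child {x : List A} {a : A} (hx : x ∈ T.mem) (hxa : x ++ [a] ∈ T.mem) (hne : x ≠ []) :
    T.step p x (x ++ [a]) = p / (1 + (T.numChildren x : ℝ) * p) := by
  unfold step
  rw [if_pos ⟨hx, hxa⟩, if_pos ⟨a, rfl⟩, if_neg hne]

lemma step_child_root {a : A} (ha : [a] ∈ T.mem) :
    T.step p [] [a] = 1 / (T.numChildren ([] : List A) : ℝ) := by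
  unfold step
  rw [if_pos ⟨T.root_mem, ha⟩, if_pos ⟨a, rfl⟩, if_pos rfl]

lemma step_parent {x : List A} (hx : x ∈ T.mem) (hne : x ≠ []) :
    T.step p x x.dropLast = 1 / (1 + (T.numChildren x : ℝ) * p) := by
  unfold step
  rw [if_pos ⟨hx, parent_mem' T hx hne⟩]
  rw [if_neg, if_pos ⟨hne, rfl⟩]
  rintro ⟨a, ha⟩
  have := congrArg List.length ha
  have hlen : x.dropLast.length = x.length - 1 := List.length_dropLast (xs := x)
  have : x.length ≥ 1 := List.length_pos_iff.mpr hne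
  simp only [List.length_append, List.length_singleton] at *
  omega

lemma step_nonneg (hp : 0 ≤ p) (x y : List A) : 0 ≤ T.step p x y := by
  unfold step
  split_ifs
  · positivity
  · positivity
  · positivity
  · exact le_refl 0
  · exact le_refl 0

lemma mem_nbrF_of_step_ne_zero {x y : List A} (h : T.step p x y ≠ 0) :
    x ∈ T.mem ∧ y ∈ T.mem ∧ y ∈ nbrF T hT x := by
  unfold step at h
  split_ifs at h with h1 h2 h3 h4
  · -- child case
    obtain ⟨a, rfl⟩ := h2
    exact ⟨h1.1, h1.2, Finset.mem_union_left _ ((mem_childF T hT).mpr ⟨h1.1, a, h1.2, rfl⟩)⟩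
  · obtain ⟨a, rfl⟩ := h2
    exact ⟨h1.1, h1.2, Finset.mem_union_left _ ((mem_childF T hT).mpr ⟨h1.1, a, h1.2, rfl⟩)⟩
  · obtain ⟨hne, rfl⟩ := h4
    refine ⟨h1.1, h1.2, Finset.mem_union_right _ ?_⟩
    rw [if_neg hne]
    exact Finset.mem_singleton_self _
  · exact absurd rfl h
  · exact absurd rfl h

lemma step_eq_zero_of_not_mem_nbrF {x y : List A} (h : y ∉ nbrF T hT x) :
    T.step p x y = 0 := by
  by_contra hc
  exact h (mem_nbrF_of_step_ne_zero T hT p hc).2.2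

lemma step_eq_zero_of_not_mem {x y : List A} (h : x ∉ T.mem) : T.step p x y = 0 := by
  unfold step
  rw [if_neg (by rintro ⟨hx, -⟩; exact h hx)]

lemma dropLast_not_mem_childF {x : List A} (hne : x ≠ []) :
    x.dropLast ∉ childF T hT x := by
  intro h
  rcases (mem_childF T hT).mp h with ⟨-, a, -, ha⟩
  have := congrArg List.length ha
  have : x.length ≥ 1 := List.length_pos_iff.mpr hne
  simp only [List.length_dropLast, List.length_append, List.length_singleton] at *
  omega

lemma rowsum_eq_one (hp : 0 ≤ p) {x : List A} (hx : x ∈ T.mem) (hne : x ≠ []) :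
    ∑ y ∈ nbrF T hT x, T.step p x y = 1 := by
  unfold nbrF
  rw [if_neg hne, Finset.sum_union (by
    simp only [Finset.disjoint_singleton_right]
    exact dropLast_not_mem_childF T hT hne)]
  rw [Finset.sum_singleton, step_parent T p hx hne]
  have hsum : ∑ y ∈ childF T hT x, T.step p x y
      = (childF T hT x).card * (p / (1 + (T.numChildren x : ℝ) * p)) := by
    rw [Finset.sum_congr rfl (fun y hy => ?_), Finset.sum_const, nsmul_eq_mul]
    rcases (mem_childF T hT).mp hy with ⟨-, a, ha, rfl⟩
    exact step_child T p hx ha hne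
  rw [hsum, childF_card T hT hx]
  have hpos := numChildren_pos_real T p hp x
  field_simp
  ring

lemma rowsum_root (hp : 0 ≤ p) :
    ∑ y ∈ nbrF T hT [], T.step p [] y = if T.numChildren ([] : List A) = 0 then 0 else 1 := by
  unfold nbrF
  rw [if_pos rfl, Finset.union_empty]
  have hsum : ∑ y ∈ childF T hT [], T.step p [] y
      = (childF T hT []).card * (1 / (T.numChildren ([] : List A) : ℝ)) := by
    rw [Finset.sum_congr rfl (fun y hy => ?_), Finset.sum_const, nsmul_eq_mul]
    rcases (mem_childF T hT).mp hy with ⟨-, a, ha, rfl⟩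
    simpa using step_child_root T p ha
  rw [hsum, childF_card T hT T.root_mem]
  split
  · rename_i h; rw [h]; simp
  · rename_i h
    have : (T.numChildren ([] : List A) : ℝ) ≠ 0 := Nat.cast_ne_zero.mpr h
    field_simp

lemma rowsum_le_one (hp : 0 ≤ p) (x : List A) :
    ∑ y ∈ nbrF T hT x, T.step p x y ≤ 1 := by
  by_cases hx : x ∈ T.mem
  · by_cases hne : x = []
    · subst hne
      rw [rowsum_root T hT p hp]
      split <;> norm_num
    · rw [rowsum_eq_one T hT p hp hx hne]
  · calc ∑ y ∈ nbrF T hT x, T.step p x y = 0 := by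
          apply Finset.sum_eq_zero
          intro y _
          exact step_eq_zero_of_not_mem T p hx
        _ ≤ 1 := by norm_num

lemma rowsum_nonneg (hp : 0 ≤ p) (x : List A) :
    0 ≤ ∑ y ∈ nbrF T hT x, T.step p x y :=
  Finset.sum_nonneg fun y _ => step_nonneg T p hp x y

end StepLemmas

end RTree
namespace RTree
lemma step_eq_zero_of_not_mem_target {A : Type*} (T : RTree A) (p : ℝ) {x y : List A}
    (h : y ∉ T.mem) : T.step p x y = 0 := by
  unfold step
  rw [if_neg (by rintro ⟨-, hy⟩; exact h hy)]
end RTree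
namespace RTree

section PathSums

variable {A : Type*} (T : RTree A) (hT : T.LocFin) (p : ℝ)

lemma pathProb_nil : T.pathProb p [] = 1 := rfl
lemma pathProb_single (x : List A) : T.pathProb p [x] = 1 := rfl
lemma pathProb_cons (x y : List A) (r : List (List A)) :
    T.pathProb p (x :: y :: r) = T.step p x y * T.pathProb p (y :: r) := rfl

lemma pathProb_nonneg (hp : 0 ≤ p) : ∀ l : List (List A), 0 ≤ T.pathProb p l
  | [] => by rw [pathProb_nil]; norm_num
  | [x] => by rw [pathProb_single]; norm_num
  | x :: y :: r =>
      mul_nonneg (step_nonneg T p hp x y) (pathProb_nonneg hp (y :: r))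

/-- The property of trajectories appearing in `escProb`. -/
def Traj (j : ℕ) (x : List A) (l : List (List A)) : Prop :=
  l.length = j + 1 ∧ l.head? = some x ∧
    ∀ (i : ℕ) (h : i < l.length), i ≠ 0 → l.get ⟨i, h⟩ ≠ []

/-- Path sum started from `x`. -/
noncomputable def PS (j : ℕ) (x : List A) : ℝ :=
  ∑' l : {l : List (List A) // Traj j x l}, T.pathProb p l.1

lemma cylProb_eq_PS (M : ℕ) :
    T.cylProb p M (fun i v => i ≠ 0 → v ≠ []) = PS T p M [] := rfl

/-- Finset of all structurally valid trajectories. -/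
noncomputable def paths : ℕ → List A → Finset (List (List A))
  | 0, x => {[x]}
  | (j+1), x => ((nbrF T hT x).filter (· ≠ [])).biUnion
      (fun y => (paths j y).image (List.cons x))

lemma traj_of_mem_paths : ∀ (j : ℕ) (x : List A) (l : List (List A)),
    l ∈ paths T hT j x → Traj j x l := by
  intro j
  induction j with
  | zero =>
      intro x l hl
      rw [paths, Finset.mem_singleton] at hl
      subst hl
      exact ⟨rfl, rfl, by intro i h hi; exact absurd (Nat.lt_one_iff.mp h) hi⟩
  | succ j ih =>
      intro x l hl
      rw [paths, Finset.mem_biUnion] at hl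
      obtain ⟨y, hy, hl⟩ := hl
      rw [Finset.mem_image] at hl
      obtain ⟨l', hl', rfl⟩ := hl
      obtain ⟨hlen, hhead, hnz⟩ := ih y l' hl'
      refine ⟨by simp [hlen], rfl, ?_⟩
      intro i h hi
      cases i with
      | zero => exact absurd rfl hi
      | succ i =>
          rw [List.get_cons_succ]
          rcases Nat.eq_zero_or_pos i with rfl | hipos
          · have h0 : l'.get ⟨0, by omega⟩ = y := by
              have h1 : l'.head? = some (l'.get ⟨0, by omega⟩) := by
                cases l' with
                | nil => simp at hlen
                | cons a t => rfl
              rw [hhead] at h1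
              exact (Option.some_injective _ h1).symm
            rw [h0]
            exact (Finset.mem_filter.mp hy).2
          · exact hnz i _ (by omega)

lemma mem_paths_of_pathProb_ne_zero : ∀ (j : ℕ) (x : List A) (l : List (List A)),
    Traj j x l → T.pathProb p l ≠ 0 → l ∈ paths T hT j x := by
  intro j
  induction j with
  | zero =>
      rintro x l ⟨hlen, hhead, -⟩ _
      rw [paths, Finset.mem_singleton]
      cases l with
      | nil => simp at hlen
      | cons a t =>
          cases t with
          | nil =>
              have : a = x := Option.some_injective _ hhead
              rw [this]
          | cons b t' => simp at hlen
  | succ j ih =>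
      rintro x l ⟨hlen, hhead, hnz⟩ hne
      cases l with
      | nil => simp at hlen
      | cons a t =>
          have ha : a = x := Option.some_injective _ hhead
          subst ha
          cases t with
          | nil => simp at hlen
          | cons y r =>
              rw [pathProb_cons] at hne
              have hstep : T.step p a y ≠ 0 := fun h => hne (by rw [h, zero_mul])
              have hpath : T.pathProb p (y :: r) ≠ 0 := fun h => hne (by rw [h, mul_zero])
              have hynz : y ≠ [] := by
                have := hnz 1 (by simp) one_ne_zero
                simpa using this
              have htraj : Traj j y (y :: r) := by
                refine ⟨by simpa using hlen, rfl, ?_⟩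
                intro i h hi
                have := hnz (i+1) (by simpa using Nat.succ_lt_succ h) (Nat.succ_ne_zero i)
                simpa using this
              rw [paths, Finset.mem_biUnion]
              refine ⟨y, Finset.mem_filter.mpr ⟨(mem_nbrF_of_step_ne_zero T hT p hstep).2.2, hynz⟩, ?_⟩
              rw [Finset.mem_image]
              exact ⟨y :: r, ih y (y :: r) htraj hpath, rfl⟩

lemma PS_eq_sum (j : ℕ) (x : List A) :
    PS T p j x = ∑ l ∈ paths T hT j x, T.pathProb p l := by
  unfold PS
  rw [tsum_eq_sum (s := (paths T hT j x).subtype (Traj j x))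
    (by
      intro b hb
      by_contra hne
      apply hb
      rw [Finset.mem_subtype]
      exact mem_paths_of_pathProb_ne_zero T hT p j x b.1 b.2 hne)]
  rw [Finset.sum_subtype_of_mem (fun l => T.pathProb p l)]
  intro l hl
  exact traj_of_mem_paths T hT j x l hl

include hT in
lemma PS_zero (x : List A) : PS T p 0 x = 1 := by
  rw [PS_eq_sum T hT, paths, Finset.sum_singleton, pathProb_single]

lemma PS_succ (j : ℕ) (x : List A) :
    PS T p (j+1) x = ∑ y ∈ (nbrF T hT x).filter (· ≠ []), T.step p x y * PS T p j y := by
  rw [PS_eq_sum T hT, paths]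
  rw [Finset.sum_biUnion (by
    intro y1 h1 y2 h2 hne
    simp only [Function.onFun]
    rw [Finset.disjoint_left]
    intro l hl1 hl2
    rw [Finset.mem_image] at hl1 hl2
    obtain ⟨l1, hl1, rfl⟩ := hl1
    obtain ⟨l2, hl2, heq⟩ := hl2
    have hl2' : l2 = l1 := by simpa using heq
    subst hl2'
    have h1' := (traj_of_mem_paths T hT j y1 l2 hl1).2.1
    have h2' := (traj_of_mem_paths T hT j y2 l2 hl2).2.1
    rw [h1'] at h2'
    exact hne (Option.some_injective _ h2'))]
  apply Finset.sum_congr rfl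
  intro y hy
  rw [Finset.sum_image (by intro l1 _ l2 _ h; simpa using h)]
  rw [PS_eq_sum T hT, Finset.mul_sum]
  apply Finset.sum_congr rfl
  intro l hl
  obtain ⟨hlen, hhead, -⟩ := traj_of_mem_paths T hT j y l hl
  cases l with
  | nil => simp at hlen
  | cons b r =>
      have hb : b = y := Option.some_injective _ hhead
      subst hb
      rw [pathProb_cons]

end PathSums

end RTree
namespace RTree

section Recursions

variable {A : Type*} (T : RTree A) (hT : T.LocFin) (p : ℝ)

/-- Probability of avoiding the vertex `u` for `j` steps, started at `x`. -/
noncomputable def avoidR (u : List A) : ℕ → List A → ℝ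
  | 0, x => if x = u then 0 else 1
  | (j+1), x => if x = u then 0 else ∑ y ∈ nbrF T hT x, T.step p x y * avoidR u j y

lemma avoidR_self (u : List A) (j : ℕ) : avoidR T hT p u j u = 0 := by
  cases j <;> simp [avoidR]

lemma avoidR_zero_ne {u x : List A} (h : x ≠ u) : avoidR T hT p u 0 x = 1 := by
  simp [avoidR, h]

lemma avoidR_succ_ne {u x : List A} (h : x ≠ u) (j : ℕ) :
    avoidR T hT p u (j+1) x = ∑ y ∈ nbrF T hT x, T.step p x y * avoidR T hT p u j y := by
  simp [avoidR, h]

lemma avoidR_nonneg (hp : 0 ≤ p) (u : List A) : ∀ (j : ℕ) (x : List A), 0 ≤ avoidR T hT p u j x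
  | 0, x => by unfold avoidR; split <;> norm_num
  | (j+1), x => by
      unfold avoidR; split
      · exact le_refl 0
      · exact Finset.sum_nonneg fun y _ =>
          mul_nonneg (step_nonneg T p hp x y) (avoidR_nonneg hp u j y)

lemma avoidR_le_one (hp : 0 ≤ p) (u : List A) : ∀ (j : ℕ) (x : List A), avoidR T hT p u j x ≤ 1
  | 0, x => by unfold avoidR; split <;> norm_num
  | (j+1), x => by
      unfold avoidR; split
      · norm_num
      · calc ∑ y ∈ nbrF T hT x, T.step p x y * avoidR T hT p u j y
            ≤ ∑ y ∈ nbrF T hT x, T.step p x y := by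
              apply Finset.sum_le_sum
              intro y _
              calc T.step p x y * avoidR T hT p u j y ≤ T.step p x y * 1 :=
                    mul_le_mul_of_nonneg_left (avoidR_le_one hp u j y) (step_nonneg T p hp x y)
                _ = T.step p x y := mul_one _
          _ ≤ 1 := rowsum_le_one T hT p hp x

lemma avoidR_eq_zero_of_not_mem (u : List A) (j : ℕ) {x : List A}
    (hx : x ∉ T.mem) (hxu : x ≠ u) : avoidR T hT p u (j+1) x = 0 := by
  rw [avoidR_succ_ne T hT p hxu]
  apply Finset.sum_eq_zero
  intro y _
  rw [step_eq_zero_of_not_mem T p hx, zero_mul]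

include hT in
lemma avoidR_nil_eq_PS (j : ℕ) : ∀ {x : List A}, x ≠ [] → avoidR T hT p [] j x = PS T p j x := by
  induction j with
  | zero =>
      intro x hx
      rw [avoidR_zero_ne T hT p hx, PS_zero T hT]
  | succ j ih =>
      intro x hx
      rw [avoidR_succ_ne T hT p hx, PS_succ T hT]
      rw [← Finset.sum_filter_add_sum_filter_not (nbrF T hT x) (· ≠ [])]
      have h2 : ∑ y ∈ (nbrF T hT x).filter (fun y => ¬ y ≠ []),
          T.step p x y * avoidR T hT p [] j y = 0 := by
        apply Finset.sum_eq_zero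
        intro y hy
        have : y = [] := by simpa using (Finset.mem_filter.mp hy).2
        rw [this, avoidR_self, mul_zero]
      rw [h2, add_zero]
      apply Finset.sum_congr rfl
      intro y hy
      rw [ih (Finset.mem_filter.mp hy).2]

lemma avoidR_succ_le (hp : 0 ≤ p) (u : List A) :
    ∀ (j : ℕ) (x : List A), avoidR T hT p u (j+1) x ≤ avoidR T hT p u j x
  | 0, x => by
      rcases eq_or_ne x u with rfl | hx
      · rw [avoidR_self, avoidR_self]
      · rw [avoidR_zero_ne T hT p hx]
        exact avoidR_le_one T hT p hp u 1 x
  | (j+1), x => by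
      rcases eq_or_ne x u with rfl | hx
      · rw [avoidR_self, avoidR_self]
      · rw [avoidR_succ_ne T hT p hx, avoidR_succ_ne T hT p hx]
        apply Finset.sum_le_sum
        intro y _
        exact mul_le_mul_of_nonneg_left (avoidR_succ_le hp u j y) (step_nonneg T p hp x y)

lemma avoidR_anti (hp : 0 ≤ p) (u : List A) {j J : ℕ} (h : j ≤ J) (x : List A) :
    avoidR T hT p u J x ≤ avoidR T hT p u j x := by
  induction J with
  | zero => rw [Nat.le_zero.mp h]
  | succ J ih =>
      rcases Nat.lt_or_ge j (J+1) with h' | h'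
      · exact le_trans (avoidR_succ_le T hT p hp u J x) (ih (by omega))
      · rw [le_antisymm h h']

lemma nbr_sum_split {x : List A} (hne : x ≠ []) (f : List A → ℝ) :
    ∑ y ∈ nbrF T hT x, f y = f x.dropLast + ∑ y ∈ childF T hT x, f y := by
  unfold nbrF
  rw [if_neg hne, Finset.sum_union (by
    simp only [Finset.disjoint_singleton_right]
    exact dropLast_not_mem_childF T hT hne), Finset.sum_singleton, add_comm]

/-- Depth monotonicity of the root-avoidance probability. -/
lemma avoidR_child_ge (hp : 0 ≤ p) :
    ∀ (j : ℕ) (x : List A), x ∈ T.mem → ∀ a : A, x ++ [a] ∈ T.mem →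
      avoidR T hT p [] j x ≤ avoidR T hT p [] j (x ++ [a])
  | 0, x => by
      intro hx a ha
      rw [avoidR_zero_ne T hT p (show x ++ [a] ≠ [] by simp)]
      exact avoidR_le_one T hT p hp [] 0 x
  | (j+1), x => by
      intro hx a ha
      rcases eq_or_ne x [] with rfl | hne
      · rw [avoidR_self]
        exact avoidR_nonneg T hT p hp [] (j+1) ([] ++ [a])
      · have hyne : (x ++ [a]) ≠ [] := by simp
        have hdrop : (x ++ [a]).dropLast = x := List.dropLast_concat
        have hrow : T.step p (x++[a]) x + ∑ z ∈ childF T hT (x++[a]), T.step p (x++[a]) z = 1 := by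
          have h0 := rowsum_eq_one T hT p hp ha hyne
          rw [nbr_sum_split T hT hyne, hdrop] at h0
          exact h0
        rw [avoidR_succ_ne T hT p hyne, nbr_sum_split T hT hyne, hdrop]
        have h1 : (∑ z ∈ childF T hT (x++[a]), T.step p (x++[a]) z) * avoidR T hT p [] j (x++[a])
            ≤ ∑ z ∈ childF T hT (x++[a]), T.step p (x++[a]) z * avoidR T hT p [] j z := by
          rw [Finset.sum_mul]
          apply Finset.sum_le_sum
          intro z hz
          rcases (mem_childF T hT).mp hz with ⟨-, b, hb, rfl⟩
          exact mul_le_mul_of_nonneg_left (avoidR_child_ge hp j (x++[a]) ha b hb)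
            (step_nonneg T p hp (x++[a]) _)
        have h2 : avoidR T hT p [] j x ≤ avoidR T hT p [] j (x ++ [a]) :=
          avoidR_child_ge hp j x hx a ha
        have h3 : 0 ≤ ∑ z ∈ childF T hT (x++[a]), T.step p (x++[a]) z :=
          Finset.sum_nonneg fun z _ => step_nonneg T p hp _ _
        calc avoidR T hT p [] (j+1) x ≤ avoidR T hT p [] j x := avoidR_succ_le T hT p hp [] j x
          _ = (T.step p (x++[a]) x + ∑ z ∈ childF T hT (x++[a]), T.step p (x++[a]) z)
                * avoidR T hT p [] j x := by rw [hrow, one_mul]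
          _ ≤ T.step p (x++[a]) x * avoidR T hT p [] j x
                + (∑ z ∈ childF T hT (x++[a]), T.step p (x++[a]) z)
                  * avoidR T hT p [] j (x++[a]) := by
              rw [add_mul]
              exact add_le_add (le_refl _) (mul_le_mul_of_nonneg_left h2 h3)
          _ ≤ T.step p (x++[a]) x * avoidR T hT p [] j x
                + ∑ z ∈ childF T hT (x++[a]), T.step p (x++[a]) z * avoidR T hT p [] j z :=
              add_le_add (le_refl _) h1

lemma avoidR_prefix_le (hp : 0 ≤ p) (j : ℕ) (t : List A) :
    ∀ (u : List A), u ++ t ∈ T.mem → avoidR T hT p [] j u ≤ avoidR T hT p [] j (u ++ t) := by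
  induction t using List.reverseRecOn with
  | nil => intro u hu; simp
  | append_singleton t b ih =>
      intro u hu
      rw [← List.append_assoc] at hu
      have h1 : u ++ t ∈ T.mem := T.parent_mem _ b hu
      calc avoidR T hT p [] j u ≤ avoidR T hT p [] j (u ++ t) := ih u h1
        _ ≤ avoidR T hT p [] j ((u ++ t) ++ [b]) := avoidR_child_ge T hT p hp j (u++t) h1 b hu
        _ = avoidR T hT p [] j (u ++ (t ++ [b])) := by rw [List.append_assoc]

lemma avoidR_prefix_le' (hp : 0 ≤ p) (j : ℕ) {u x : List A} (hx : x ∈ T.mem) (hux : u <+: x) :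
    avoidR T hT p [] j u ≤ avoidR T hT p [] j x := by
  obtain ⟨t, rfl⟩ := hux
  exact avoidR_prefix_le T hT p hp j t u hx

/-- Monotonicity in the bias parameter. -/
lemma avoidR_lam_mono {p' : ℝ} (hp' : 0 < p') (hpp : p' ≤ p) :
    ∀ (j : ℕ) (x : List A), avoidR T hT p' [] j x ≤ avoidR T hT p [] j x
  | 0, x => by
      rcases eq_or_ne x ([] : List A) with rfl | hx
      · rw [avoidR_self, avoidR_self]
      · rw [avoidR_zero_ne T hT p' hx, avoidR_zero_ne T hT p hx]
  | (j+1), x => by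
      have hp0 : 0 ≤ p := le_trans hp'.le hpp
      rcases eq_or_ne x ([] : List A) with rfl | hne
      · rw [avoidR_self, avoidR_self]
      · by_cases hx : x ∈ T.mem
        swap
        · rw [avoidR_eq_zero_of_not_mem T hT p' [] j hx hne,
            avoidR_eq_zero_of_not_mem T hT p [] j hx hne]
        · set k := (T.numChildren x : ℝ) with hk
          have hknn : 0 ≤ k := Nat.cast_nonneg _
          have form : ∀ q : ℝ, 0 ≤ q → avoidR T hT q [] (j+1) x
              = (avoidR T hT q [] j x.dropLast
                  + q * ∑ c ∈ childF T hT x, avoidR T hT q [] j c) / (1 + k*q) := by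
            intro q hq
            have hd : (0:ℝ) < 1 + k*q := by positivity
            rw [avoidR_succ_ne T hT q hne, nbr_sum_split T hT hne, step_parent T q hx hne]
            have hc : ∑ c ∈ childF T hT x, T.step q x c * avoidR T hT q [] j c
                = q / (1 + k*q) * ∑ c ∈ childF T hT x, avoidR T hT q [] j c := by
              rw [Finset.mul_sum]
              apply Finset.sum_congr rfl
              intro c hc
              rcases (mem_childF T hT).mp hc with ⟨-, b, hb, rfl⟩
              rw [step_child T q hx hb hne, hk]
            rw [hc]
            field_simp
            rw [hk]; ring
          rw [form p' hp'.le, form p hp0]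
          have hd' : (0:ℝ) < 1 + k*p' := by positivity
          have hd : (0:ℝ) < 1 + k*p := by positivity
          set Apar := avoidR T hT p [] j x.dropLast with hApar
          set S := ∑ c ∈ childF T hT x, avoidR T hT p [] j c with hS
          have hA'par : avoidR T hT p' [] j x.dropLast ≤ Apar := avoidR_lam_mono hp' hpp j _
          have hS' : ∑ c ∈ childF T hT x, avoidR T hT p' [] j c ≤ S :=
            Finset.sum_le_sum fun c _ => avoidR_lam_mono hp' hpp j c
          have hApar_nn : 0 ≤ Apar := avoidR_nonneg T hT p hp0 [] j _
          have hSnn : 0 ≤ S := Finset.sum_nonneg fun c _ => avoidR_nonneg T hT p hp0 [] j c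
          have hkA : k * Apar ≤ S := by
            have hcard : (childF T hT x).card = T.numChildren x := childF_card T hT hx
            have : ∀ c ∈ childF T hT x, Apar ≤ avoidR T hT p [] j c := by
              intro c hc
              rcases (mem_childF T hT).mp hc with ⟨-, b, hb, rfl⟩
              have hxA : avoidR T hT p [] j x ≤ avoidR T hT p [] j (x ++ [b]) :=
                avoidR_child_ge T hT p hp0 j x hx b hb
              have hpar : Apar ≤ avoidR T hT p [] j x := by
                rcases eq_or_ne x.dropLast ([] : List A) with hdn | hdn
                · rw [hApar, hdn, avoidR_self]
                  exact avoidR_nonneg T hT p hp0 [] j x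
                · exact avoidR_prefix_le' T hT p hp0 j hx ⟨[x.getLast hne], concat_self hne⟩
              exact le_trans hpar hxA
            calc k * Apar = (childF T hT x).card * Apar := by rw [hcard, hk]
              _ = ∑ _c ∈ childF T hT x, Apar := by rw [Finset.sum_const, nsmul_eq_mul]
              _ ≤ S := Finset.sum_le_sum this
          calc (avoidR T hT p' [] j x.dropLast
                  + p' * ∑ c ∈ childF T hT x, avoidR T hT p' [] j c) / (1 + k*p')
              ≤ (Apar + p' * S) / (1 + k*p') := by
                have hnum : avoidR T hT p' [] j x.dropLast
                    + p' * ∑ c ∈ childF T hT x, avoidR T hT p' [] j c ≤ Apar + p' * S :=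
                  add_le_add hA'par (mul_le_mul_of_nonneg_left hS' hp'.le)
                exact (div_le_div_iff_of_pos_right hd').mpr hnum
            _ ≤ (Apar + p * S) / (1 + k*p) := by
                rw [div_le_div_iff₀ hd' hd]
                nlinarith [mul_nonneg (sub_nonneg.mpr hpp) (sub_nonneg.mpr hkA)]

end Recursions

end RTree
namespace RTree

section HitLemmas

variable {A : Type*} (T : RTree A) (hT : T.LocFin) (p : ℝ)

lemma prefix_ne_nil {u x : List A} (hune : u ≠ []) (hux : u <+: x) : x ≠ [] := by
  rintro rfl
  exact hune (List.prefix_nil.mp hux)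

lemma ne_dropLast_of_prefix {u x : List A} (hune : u ≠ []) (hux : u <+: x) : x ≠ u.dropLast := by
  intro h
  have h1 := hux.length_le
  have h2 := congrArg List.length h
  have h3 : 1 ≤ u.length := List.length_pos_iff.mpr hune
  rw [List.length_dropLast] at h2
  omega

lemma prefix_dropLast {u x : List A} (hux : u <+: x) (hne : u ≠ x) : u <+: x.dropLast := by
  have hxne : x ≠ [] := by
    rintro rfl
    exact hne (List.prefix_nil.mp hux)
  have hdl : x.dropLast <+: x := ⟨[x.getLast hxne], concat_self hxne⟩
  apply List.prefix_of_prefix_length_le hux hdl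
  have hlt : u.length < x.length := by
    rcases Nat.lt_or_ge u.length x.length with h | h
    · exact h
    · exact absurd (hux.eq_of_length (le_antisymm hux.length_le h)) hne
  rw [List.length_dropLast]
  omega

lemma mem_nbrF_cases {x y : List A} (h : y ∈ nbrF T hT x) :
    y ∈ childF T hT x ∨ (x ≠ [] ∧ y = x.dropLast) := by
  unfold nbrF at h
  rcases Finset.mem_union.mp h with h | h
  · exact Or.inl h
  · right
    split at h
    · simp at h
    · rename_i hne
      exact ⟨hne, Finset.mem_singleton.mp h⟩

/-- Probability of hitting the vertex `t` within `j` steps, started at `x`. -/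
noncomputable def hitR (t : List A) : ℕ → List A → ℝ
  | 0, x => if x = t then 1 else 0
  | (j+1), x => if x = t then 1 else ∑ y ∈ nbrF T hT x, T.step p x y * hitR t j y

lemma hitR_target (t : List A) (j : ℕ) : hitR T hT p t j t = 1 := by
  cases j <;> simp [hitR]

lemma hitR_zero_ne {t x : List A} (h : x ≠ t) : hitR T hT p t 0 x = 0 := by
  simp [hitR, h]

lemma hitR_succ_ne {t x : List A} (h : x ≠ t) (j : ℕ) :
    hitR T hT p t (j+1) x = ∑ y ∈ nbrF T hT x, T.step p x y * hitR T hT p t j y := by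
  simp [hitR, h]

lemma hitR_nonneg (hp : 0 ≤ p) (t : List A) : ∀ (j : ℕ) (x : List A), 0 ≤ hitR T hT p t j x
  | 0, x => by unfold hitR; split <;> norm_num
  | (j+1), x => by
      unfold hitR; split
      · norm_num
      · exact Finset.sum_nonneg fun y _ =>
          mul_nonneg (step_nonneg T p hp x y) (hitR_nonneg hp t j y)

lemma hitR_le_one (hp : 0 ≤ p) (t : List A) : ∀ (j : ℕ) (x : List A), hitR T hT p t j x ≤ 1
  | 0, x => by unfold hitR; split <;> norm_num
  | (j+1), x => by
      unfold hitR; split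
      · norm_num
      · calc ∑ y ∈ nbrF T hT x, T.step p x y * hitR T hT p t j y
            ≤ ∑ y ∈ nbrF T hT x, T.step p x y := by
              apply Finset.sum_le_sum
              intro y _
              calc T.step p x y * hitR T hT p t j y ≤ T.step p x y * 1 :=
                    mul_le_mul_of_nonneg_left (hitR_le_one hp t j y) (step_nonneg T p hp x y)
                _ = T.step p x y := mul_one _
          _ ≤ 1 := rowsum_le_one T hT p hp x

lemma one_sub_avoidR_nonneg (hp : 0 ≤ p) (u : List A) (j : ℕ) (x : List A) :
    0 ≤ 1 - avoidR T hT p u j x := by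
  have := avoidR_le_one T hT p hp u j x
  linarith

/-- Key domination: return to the root from inside the subtree of `u` factors
through the parent of `u`. -/
lemma hit_dom (hp : 0 ≤ p) {u : List A} (hune : u ≠ []) (J : ℕ) :
    ∀ j, j ≤ J → ∀ x, x ∈ T.mem → u <+: x →
      1 - avoidR T hT p [] j x
        ≤ hitR T hT p u.dropLast j x * (1 - avoidR T hT p [] J u.dropLast) := by
  intro j
  induction j with
  | zero =>
      intro _ x hx hux
      rw [avoidR_zero_ne T hT p (prefix_ne_nil hune hux), sub_self]
      exact mul_nonneg (hitR_nonneg T hT p hp _ 0 x)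
        (one_sub_avoidR_nonneg T hT p hp [] J u.dropLast)
  | succ j ih =>
      intro hj x hx hux
      have hxne : x ≠ [] := prefix_ne_nil hune hux
      have hxnepu : x ≠ u.dropLast := ne_dropLast_of_prefix hune hux
      rw [avoidR_succ_ne T hT p hxne, hitR_succ_ne T hT p hxnepu]
      have hrow := rowsum_eq_one T hT p hp hx hxne
      have key : 1 - ∑ y ∈ nbrF T hT x, T.step p x y * avoidR T hT p [] j y
          = ∑ y ∈ nbrF T hT x, T.step p x y * (1 - avoidR T hT p [] j y) := by
        simp only [mul_sub, mul_one]
        rw [Finset.sum_sub_distrib, hrow]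
      rw [key]
      have hterm : ∀ y ∈ nbrF T hT x, T.step p x y * (1 - avoidR T hT p [] j y)
          ≤ T.step p x y * (hitR T hT p u.dropLast j y
              * (1 - avoidR T hT p [] J u.dropLast)) := by
        intro y hy
        apply mul_le_mul_of_nonneg_left ?_ (step_nonneg T p hp x y)
        have hym : y ∈ T.mem := mem_of_mem_nbrF T hT hx hy
        by_cases hprefix : u <+: y
        · exact ih (by omega) y hym hprefix
        · rcases mem_nbrF_cases T hT hy with hcy | ⟨-, rfl⟩
          · exfalso
            rcases (mem_childF T hT).mp hcy with ⟨-, b, hb, rfl⟩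
            exact hprefix (hux.trans ⟨[b], rfl⟩)
          · have hxu : x = u := by
              by_contra hxu
              exact hprefix (prefix_dropLast hux (fun h => hxu h.symm))
            subst hxu
            rw [hitR_target, one_mul]
            have := avoidR_anti T hT p hp [] (show j ≤ J by omega) x.dropLast
            linarith
      calc ∑ y ∈ nbrF T hT x, T.step p x y * (1 - avoidR T hT p [] j y)
          ≤ ∑ y ∈ nbrF T hT x, T.step p x y * (hitR T hT p u.dropLast j y
              * (1 - avoidR T hT p [] J u.dropLast)) := Finset.sum_le_sum hterm
        _ = (∑ y ∈ nbrF T hT x, T.step p x y * hitR T hT p u.dropLast j y)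
              * (1 - avoidR T hT p [] J u.dropLast) := by
            rw [Finset.sum_mul]
            exact Finset.sum_congr rfl fun y _ => (mul_assoc _ _ _).symm

lemma hit_avoid_le_one (hp : 0 ≤ p) {u : List A} (hune : u ≠ []) :
    ∀ (j : ℕ) (x : List A), x ∈ T.mem → u <+: x → x ≠ u →
      hitR T hT p u.dropLast j x + avoidR T hT p u j x ≤ 1 := by
  intro j
  induction j with
  | zero =>
      intro x hx hux hxu
      rw [hitR_zero_ne T hT p (ne_dropLast_of_prefix hune hux),
        avoidR_zero_ne T hT p hxu]
      norm_num
  | succ j ih =>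
      intro x hx hux hxu
      have hxne : x ≠ [] := prefix_ne_nil hune hux
      have hxnepu : x ≠ u.dropLast := ne_dropLast_of_prefix hune hux
      rw [hitR_succ_ne T hT p hxnepu, avoidR_succ_ne T hT p hxu,
        ← Finset.sum_add_distrib]
      have hterm : ∀ y ∈ nbrF T hT x,
          T.step p x y * hitR T hT p u.dropLast j y + T.step p x y * avoidR T hT p u j y
            ≤ T.step p x y := by
        intro y hy
        rw [← mul_add]
        have hym : y ∈ T.mem := mem_of_mem_nbrF T hT hx hy
        have hbound : hitR T hT p u.dropLast j y + avoidR T hT p u j y ≤ 1 := by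
          by_cases hyu : y = u
          · subst hyu
            rw [avoidR_self, add_zero]
            exact hitR_le_one T hT p hp _ j y
          · have hpre : u <+: y := by
              rcases mem_nbrF_cases T hT hy with hcy | ⟨-, rfl⟩
              · rcases (mem_childF T hT).mp hcy with ⟨-, b, hb, rfl⟩
                exact hux.trans ⟨[b], rfl⟩
              · exact prefix_dropLast hux (fun h => hxu h.symm)
            exact ih y hym hpre hyu
        calc T.step p x y * (hitR T hT p u.dropLast j y + avoidR T hT p u j y)
            ≤ T.step p x y * 1 := mul_le_mul_of_nonneg_left hbound (step_nonneg T p hp x y)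
          _ = T.step p x y := mul_one _
      calc ∑ y ∈ nbrF T hT x, (T.step p x y * hitR T hT p u.dropLast j y
              + T.step p x y * avoidR T hT p u j y)
          ≤ ∑ y ∈ nbrF T hT x, T.step p x y := Finset.sum_le_sum hterm
        _ ≤ 1 := rowsum_le_one T hT p hp x

lemma hit_u_le (hp : 0 ≤ p) {u : List A} (hu : u ∈ T.mem) (hune : u ≠ []) {β : ℝ}
    (hβ : ∀ j, β ≤ ∑ c ∈ childF T hT u, T.step p u c * avoidR T hT p u j c) :
    ∀ j, hitR T hT p u.dropLast j u ≤ 1 - β := by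
  have hβ1 : β ≤ 1 := by
    calc β ≤ ∑ c ∈ childF T hT u, T.step p u c * avoidR T hT p u 0 c := hβ 0
      _ ≤ ∑ c ∈ childF T hT u, T.step p u c := by
          apply Finset.sum_le_sum
          intro c _
          calc T.step p u c * avoidR T hT p u 0 c ≤ T.step p u c * 1 :=
                mul_le_mul_of_nonneg_left (avoidR_le_one T hT p hp u 0 c)
                  (step_nonneg T p hp u c)
            _ = T.step p u c := mul_one _
      _ ≤ ∑ y ∈ nbrF T hT u, T.step p u y := by
          apply Finset.sum_le_sum_of_subset_of_nonneg
          · exact Finset.subset_union_left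
          · intro y _ _
            exact step_nonneg T p hp u y
      _ ≤ 1 := rowsum_le_one T hT p hp u
  have hne2 : u ≠ u.dropLast := ne_dropLast_of_prefix hune (List.prefix_refl u)
  intro j
  cases j with
  | zero =>
      rw [hitR_zero_ne T hT p hne2]
      linarith
  | succ j =>
      rw [hitR_succ_ne T hT p hne2, nbr_sum_split T hT hune, hitR_target, mul_one]
      have hrow := rowsum_eq_one T hT p hp hu hune
      rw [nbr_sum_split T hT hune] at hrow
      have hterm : ∀ c ∈ childF T hT u, T.step p u c * hitR T hT p u.dropLast j c
          ≤ T.step p u c * (1 - avoidR T hT p u j c) := by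
        intro c hc
        rcases (mem_childF T hT).mp hc with ⟨-, b, hb, rfl⟩
        apply mul_le_mul_of_nonneg_left ?_ (step_nonneg T p hp u _)
        have h := hit_avoid_le_one T hT p hp hune j (u ++ [b]) hb ⟨[b], rfl⟩ (by simp)
        linarith
      calc T.step p u u.dropLast
            + ∑ c ∈ childF T hT u, T.step p u c * hitR T hT p u.dropLast j c
          ≤ T.step p u u.dropLast
            + ∑ c ∈ childF T hT u, T.step p u c * (1 - avoidR T hT p u j c) :=
            add_le_add (le_refl _) (Finset.sum_le_sum hterm)
        _ = T.step p u u.dropLast + ∑ c ∈ childF T hT u, T.step p u c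
            - ∑ c ∈ childF T hT u, T.step p u c * avoidR T hT p u j c := by
            simp only [mul_sub, mul_one]
            rw [Finset.sum_sub_distrib]
            ring
        _ = 1 - ∑ c ∈ childF T hT u, T.step p u c * avoidR T hT p u j c := by rw [hrow]
        _ ≤ 1 - β := by linarith [hβ j]

lemma II_ineq (hp : 0 ≤ p) {u : List A} (hu : u ∈ T.mem) (hune : u ≠ []) {β : ℝ}
    (hβ : ∀ j, β ≤ ∑ c ∈ childF T hT u, T.step p u c * avoidR T hT p u j c) (J : ℕ) :
    1 - avoidR T hT p [] J u ≤ (1 - β) * (1 - avoidR T hT p [] J u.dropLast) := by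
  calc 1 - avoidR T hT p [] J u
      ≤ hitR T hT p u.dropLast J u * (1 - avoidR T hT p [] J u.dropLast) :=
        hit_dom T hT p hp hune J J (le_refl J) u hu (List.prefix_refl u)
    _ ≤ (1 - β) * (1 - avoidR T hT p [] J u.dropLast) :=
        mul_le_mul_of_nonneg_right (hit_u_le T hT p hp hu hune hβ J)
          (one_sub_avoidR_nonneg T hT p hp [] J u.dropLast)

/-- Chain bound: `k` nested good vertices below `y` force the return probability
within any horizon to be at most `(1-β)^k`. -/
lemma chain_bound (hp : 0 ≤ p) (β : ℝ) (hβnn : 0 ≤ 1 - β) (G : Set (List A))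
    (hG : ∀ u ∈ G, u ∈ T.mem ∧ u ≠ [] ∧ ∀ J, 1 - avoidR T hT p [] J u
        ≤ (1 - β) * (1 - avoidR T hT p [] J u.dropLast)) :
    ∀ (k : ℕ) (S : Finset (List A)) (y : List A), y ∈ T.mem → S.card = k →
      (∀ u ∈ S, u ∈ G ∧ u <+: y) →
      ∀ J, 1 - avoidR T hT p [] J y ≤ (1 - β)^k := by
  intro k
  induction k with
  | zero =>
      intro S y hy _ _ J
      rw [pow_zero]
      linarith [avoidR_nonneg T hT p hp [] J y]
  | succ k ih =>
      intro S y hy hcard hS J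
      have hSne : S.Nonempty := Finset.card_pos.mp (by omega)
      obtain ⟨u, huS, hmax⟩ := S.exists_max_image (fun v => v.length) hSne
      obtain ⟨huG, huy⟩ := hS u huS
      obtain ⟨hum, hune, hII⟩ := hG u huG
      have h1 : 1 - avoidR T hT p [] J y ≤ 1 - avoidR T hT p [] J u := by
        have := avoidR_prefix_le' T hT p hp J hy huy
        linarith
      have hrest : ∀ v ∈ S.erase u, v ∈ G ∧ v <+: u.dropLast := by
        intro v hv
        obtain ⟨hvne, hvS⟩ := Finset.mem_erase.mp hv
        obtain ⟨hvG, hvy⟩ := hS v hvS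
        exact ⟨hvG, prefix_dropLast
          (List.prefix_of_prefix_length_le hvy huy (hmax v hvS)) hvne⟩
      have hpum : u.dropLast ∈ T.mem := parent_mem' T hum hune
      have h3 := ih (S.erase u) u.dropLast hpum
        (by rw [Finset.card_erase_of_mem huS, hcard]; omega) hrest J
      calc 1 - avoidR T hT p [] J y ≤ 1 - avoidR T hT p [] J u := h1
        _ ≤ (1 - β) * (1 - avoidR T hT p [] J u.dropLast) := hII J
        _ ≤ (1 - β) * (1 - β)^k := mul_le_mul_of_nonneg_left h3 hβnn
        _ = (1 - β)^(k+1) := (pow_succ' (1 - β) k).symm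

end HitLemmas

end RTree
namespace RTree

section Confinement

variable {A : Type*} (T : RTree A) (hT : T.LocFin) (p : ℝ)

/-- Probability of staying inside the finite set `Bs` for `j` steps. -/
noncomputable def confR (Bs : Finset (List A)) : ℕ → List A → ℝ
  | 0, x => if x ∈ Bs then 1 else 0
  | (j+1), x => ∑ y ∈ nbrF T hT x, T.step p x y * (if y ∈ Bs then confR Bs j y else 0)

lemma confR_zero (Bs : Finset (List A)) (x : List A) :
    confR T hT p Bs 0 x = if x ∈ Bs then 1 else 0 := rfl

lemma confR_succ (Bs : Finset (List A)) (j : ℕ) (x : List A) :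
    confR T hT p Bs (j+1) x
      = ∑ y ∈ nbrF T hT x, T.step p x y * (if y ∈ Bs then confR T hT p Bs j y else 0) := rfl

lemma confR_nonneg (hp : 0 ≤ p) (Bs : Finset (List A)) :
    ∀ (j : ℕ) (x : List A), 0 ≤ confR T hT p Bs j x
  | 0, x => by rw [confR_zero]; split <;> norm_num
  | (j+1), x => by
      rw [confR_succ]
      apply Finset.sum_nonneg
      intro y _
      apply mul_nonneg (step_nonneg T p hp x y)
      split
      · exact confR_nonneg hp Bs j y
      · exact le_refl 0

lemma confR_le_one (hp : 0 ≤ p) (Bs : Finset (List A)) :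
    ∀ (j : ℕ) (x : List A), confR T hT p Bs j x ≤ 1
  | 0, x => by rw [confR_zero]; split <;> norm_num
  | (j+1), x => by
      rw [confR_succ]
      calc ∑ y ∈ nbrF T hT x, T.step p x y * (if y ∈ Bs then confR T hT p Bs j y else 0)
          ≤ ∑ y ∈ nbrF T hT x, T.step p x y := by
            apply Finset.sum_le_sum
            intro y _
            have h1 : (if y ∈ Bs then confR T hT p Bs j y else 0) ≤ 1 := by
              split
              · exact confR_le_one hp Bs j y
              · norm_num
            calc T.step p x y * (if y ∈ Bs then confR T hT p Bs j y else 0)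
                ≤ T.step p x y * 1 := mul_le_mul_of_nonneg_left h1 (step_nonneg T p hp x y)
              _ = T.step p x y := mul_one _
        _ ≤ 1 := rowsum_le_one T hT p hp x

lemma confR_one_step (hp : 0 ≤ p) (Bs : Finset (List A)) {j : ℕ} {C : ℝ} (hC : 0 ≤ C)
    (h : ∀ y ∈ Bs, confR T hT p Bs j y ≤ C) (x : List A) :
    confR T hT p Bs (j+1) x ≤ C := by
  rw [confR_succ]
  calc ∑ y ∈ nbrF T hT x, T.step p x y * (if y ∈ Bs then confR T hT p Bs j y else 0)
      ≤ ∑ y ∈ nbrF T hT x, T.step p x y * C := by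
        apply Finset.sum_le_sum
        intro y _
        apply mul_le_mul_of_nonneg_left ?_ (step_nonneg T p hp x y)
        split
        · exact h y (by assumption)
        · exact hC
    _ = (∑ y ∈ nbrF T hT x, T.step p x y) * C := (Finset.sum_mul _ _ _).symm
    _ ≤ 1 * C := mul_le_mul_of_nonneg_right (rowsum_le_one T hT p hp x) hC
    _ = C := one_mul C

lemma confR_semigroup (hp : 0 ≤ p) (Bs : Finset (List A)) {q : ℕ} {C : ℝ} (hC : 0 ≤ C)
    (h : ∀ y ∈ Bs, confR T hT p Bs q y ≤ C) :
    ∀ (m : ℕ), ∀ y ∈ Bs, confR T hT p Bs (m + q) y ≤ C * confR T hT p Bs m y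
  | 0, y => by
      intro hy
      rw [Nat.zero_add, confR_zero, if_pos hy, mul_one]
      exact h y hy
  | (m+1), y => by
      intro hy
      have hidx : m + 1 + q = (m + q) + 1 := by omega
      rw [hidx, confR_succ, confR_succ, Finset.mul_sum]
      apply Finset.sum_le_sum
      intro z _
      rw [← mul_assoc, mul_comm C (T.step p y z), mul_assoc]
      apply mul_le_mul_of_nonneg_left ?_ (step_nonneg T p hp y z)
      split
      · exact confR_semigroup hp Bs hC h m z (by assumption)
      · rw [mul_zero]

lemma confR_pow (hp : 0 ≤ p) (Bs : Finset (List A)) {R : ℕ} {δ : ℝ}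
    (hδ1 : 1 - δ ≥ 0) (hR : ∀ y ∈ Bs, confR T hT p Bs R y ≤ 1 - δ) :
    ∀ (m : ℕ), ∀ y ∈ Bs, confR T hT p Bs (R * m) y ≤ (1 - δ)^m := by
  intro m
  induction m with
  | zero =>
      intro y hy
      rw [Nat.mul_zero, pow_zero, confR_zero, if_pos hy]
  | succ m ih =>
      intro y hy
      have hidx : R * (m + 1) = R * m + R := by ring
      rw [hidx, pow_succ]
      calc confR T hT p Bs (R * m + R) y
          ≤ (1 - δ) * confR T hT p Bs (R * m) y :=
            confR_semigroup T hT p hp Bs hδ1 hR (R * m) y hy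
        _ ≤ (1 - δ) * (1 - δ)^m := mul_le_mul_of_nonneg_left (ih y hy) hδ1
        _ = (1 - δ)^m * (1 - δ) := mul_comm _ _

/-- Escape from the finite set within a number of steps equal to the depth. -/
lemma confR_escape (hp : 0 ≤ p) (Bs : Finset (List A)) {p0 : ℝ} (hp0 : 0 < p0) (hp01 : p0 ≤ 1)
    (HBmem : ∀ y ∈ Bs, y ∈ T.mem) (HBne : ∀ y ∈ Bs, y ≠ ([] : List A))
    (hstep : ∀ y ∈ Bs, (h : y ∈ Bs) → p0 ≤ T.step p y y.dropLast) :
    ∀ (L : ℕ) (y : List A), y ∈ Bs → y.length = L → ∀ (j : ℕ), L ≤ j →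
      confR T hT p Bs j y ≤ 1 - p0^j := by
  intro L
  induction L using Nat.strong_induction_on with
  | _ L ihL =>
      intro y hy hL j hj
      have hyne : y ≠ [] := HBne y hy
      have hym : y ∈ T.mem := HBmem y hy
      have hL1 : 1 ≤ L := by
        rw [← hL]
        exact List.length_pos_iff.mpr hyne
      obtain ⟨j', rfl⟩ : ∃ j', j = j' + 1 := ⟨j - 1, by omega⟩
      rw [confR_succ, nbr_sum_split T hT hyne]
      have hrow := rowsum_eq_one T hT p hp hym hyne
      rw [nbr_sum_split T hT hyne] at hrow
      have hchild : ∑ c ∈ childF T hT y,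
          T.step p y c * (if c ∈ Bs then confR T hT p Bs j' c else 0)
            ≤ ∑ c ∈ childF T hT y, T.step p y c := by
        apply Finset.sum_le_sum
        intro c _
        have h1 : (if c ∈ Bs then confR T hT p Bs j' c else 0) ≤ 1 := by
          split
          · exact confR_le_one T hT p hp Bs j' c
          · norm_num
        calc T.step p y c * (if c ∈ Bs then confR T hT p Bs j' c else 0)
            ≤ T.step p y c * 1 := mul_le_mul_of_nonneg_left h1 (step_nonneg T p hp y c)
          _ = T.step p y c := mul_one _
      have hsp := hstep y hy hy
      have hppow : (0:ℝ) ≤ p0 ^ j' := by positivity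
      have hparbound : (if y.dropLast ∈ Bs then confR T hT p Bs j' y.dropLast else 0)
          ≤ 1 - p0 ^ j' := by
        split
        · rename_i hpuB
          apply ihL (y.dropLast.length) ?_ y.dropLast hpuB rfl j' ?_
          · rw [List.length_dropLast]; omega
          · rw [List.length_dropLast]; omega
        · have : p0 ^ j' ≤ 1 := pow_le_one₀ hp0.le hp01
          linarith
      have hstep_le : T.step p y y.dropLast ≤ 1 := by
        have h0 : 0 ≤ ∑ c ∈ childF T hT y, T.step p y c :=
          Finset.sum_nonneg fun c _ => step_nonneg T p hp y c
        linarith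
      calc T.step p y y.dropLast * (if y.dropLast ∈ Bs then confR T hT p Bs j' y.dropLast else 0)
            + ∑ c ∈ childF T hT y, T.step p y c
              * (if c ∈ Bs then confR T hT p Bs j' c else 0)
          ≤ T.step p y y.dropLast * (1 - p0 ^ j') + ∑ c ∈ childF T hT y, T.step p y c :=
            add_le_add (mul_le_mul_of_nonneg_left hparbound (step_nonneg T p hp y _)) hchild
        _ = 1 - T.step p y y.dropLast * p0 ^ j' := by
            rw [mul_sub, mul_one]
            linarith [hrow]
        _ ≤ 1 - p0 * p0 ^ j' := by nlinarith
        _ = 1 - p0 ^ (j' + 1) := by rw [pow_succ]; ring_nf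

end Confinement

section MainClaim

variable {A : Type*} (T : RTree A) (hT : T.LocFin) (p : ℝ)

/-- The key uniform truncation estimate. -/
lemma main_claim (hp : 0 ≤ p) (Bs : Finset (List A)) (ε : ℝ) (hε : 0 ≤ ε)
    (Hout : ∀ y, y ∈ T.mem → y ∉ Bs → y ≠ [] → ∀ i : ℕ, 1 - avoidR T hT p [] i y ≤ ε) :
    ∀ (j d : ℕ) (x : List A), x ∈ T.mem → x ≠ [] →
      avoidR T hT p [] j x - avoidR T hT p [] (j+d) x
        ≤ confR T hT p (Bs.erase []) j x + ε := by
  intro j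
  induction j with
  | zero =>
      intro d x hx hxne
      rw [avoidR_zero_ne T hT p hxne, Nat.zero_add, confR_zero]
      by_cases hB : x ∈ Bs
      · rw [if_pos (Finset.mem_erase.mpr ⟨hxne, hB⟩)]
        have := avoidR_nonneg T hT p hp [] d x
        linarith
      · rw [if_neg (fun hc => hB (Finset.mem_erase.mp hc).2)]
        have := Hout x hx hB hxne d
        linarith
  | succ j ih =>
      intro d x hx hxne
      have hidx : j + 1 + d = (j + d) + 1 := by omega
      rw [hidx, avoidR_succ_ne T hT p hxne, avoidR_succ_ne T hT p hxne,
        ← Finset.sum_sub_distrib, confR_succ]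
      have hterm : ∀ y ∈ nbrF T hT x,
          T.step p x y * avoidR T hT p [] j y - T.step p x y * avoidR T hT p [] (j+d) y
            ≤ T.step p x y * ((if y ∈ Bs.erase [] then confR T hT p (Bs.erase []) j y else 0) + ε) := by
        intro y hy
        rw [← mul_sub]
        apply mul_le_mul_of_nonneg_left ?_ (step_nonneg T p hp x y)
        have hym : y ∈ T.mem := mem_of_mem_nbrF T hT hx hy
        rcases eq_or_ne y ([] : List A) with rfl | hyne
        · rw [avoidR_self, avoidR_self]
          have h3 : 0 ≤ (if ([] : List A) ∈ Bs.erase []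
              then confR T hT p (Bs.erase []) j ([] : List A) else 0) := by
            split
            · exact confR_nonneg T hT p hp _ j _
            · exact le_refl 0
          linarith
        · by_cases hyB : y ∈ Bs
          · have h1 := ih d y hym hyne
            rw [if_pos (Finset.mem_erase.mpr ⟨hyne, hyB⟩)]
            linarith
          · have h1 := Hout y hym hyB hyne (j + d)
            have h2 := avoidR_le_one T hT p hp [] j y
            have h3 : 0 ≤ (if y ∈ Bs.erase [] then confR T hT p (Bs.erase []) j y else 0) := by
              split
              · exact confR_nonneg T hT p hp _ j y
              · exact le_refl 0
            linarith
      calc ∑ y ∈ nbrF T hT x,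
            (T.step p x y * avoidR T hT p [] j y - T.step p x y * avoidR T hT p [] (j+d) y)
          ≤ ∑ y ∈ nbrF T hT x, T.step p x y
              * ((if y ∈ Bs.erase [] then confR T hT p (Bs.erase []) j y else 0) + ε) :=
            Finset.sum_le_sum hterm
        _ = ∑ y ∈ nbrF T hT x, T.step p x y
              * (if y ∈ Bs.erase [] then confR T hT p (Bs.erase []) j y else 0)
            + (∑ y ∈ nbrF T hT x, T.step p x y) * ε := by
            rw [Finset.sum_mul]
            rw [← Finset.sum_add_distrib]
            exact Finset.sum_congr rfl fun y _ => by ring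
        _ ≤ confR T hT p (Bs.erase []) (j+1) x + ε := by
            rw [confR_succ]
            have h1 : (∑ y ∈ nbrF T hT x, T.step p x y) * ε ≤ 1 * ε :=
              mul_le_mul_of_nonneg_right (rowsum_le_one T hT p hp x) hε
            linarith

end MainClaim

end RTree
namespace RTree

section CylFacts

variable {A : Type*} (T : RTree A) (hT : T.LocFin) (p : ℝ)

include hT in
lemma cylProb_nonneg (hp : 0 ≤ p) (M : ℕ) :
    0 ≤ T.cylProb p M (fun i v => i ≠ 0 → v ≠ []) := by
  rw [cylProb_eq_PS, PS_eq_sum T hT]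
  exact Finset.sum_nonneg fun l _ => pathProb_nonneg T p hp l

include hT in
lemma cylProb_zero' : T.cylProb p 0 (fun i v => i ≠ 0 → v ≠ []) = 1 := by
  rw [cylProb_eq_PS, PS_zero T hT]

include hT in
lemma escProb_le_cylProb (hp : 0 ≤ p) (M : ℕ) :
    T.escProb p ≤ T.cylProb p M (fun i v => i ≠ 0 → v ≠ []) := by
  apply ciInf_le
  refine ⟨0, ?_⟩
  rintro r ⟨M', rfl⟩
  exact cylProb_nonneg T hT p hp M'

include hT in
lemma escProb_nonneg (hp : 0 ≤ p) : 0 ≤ T.escProb p :=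
  le_ciInf fun M => cylProb_nonneg T hT p hp M

include hT in
lemma escProb_le_one (hp : 0 ≤ p) : T.escProb p ≤ 1 := by
  calc T.escProb p ≤ T.cylProb p 0 (fun i v => i ≠ 0 → v ≠ []) :=
        escProb_le_cylProb T hT p hp 0
    _ = 1 := cylProb_zero' T hT p

include hT in
lemma cylProb_mono_lam {p' : ℝ} (hp' : 0 < p') (hpp : p' ≤ p) (M : ℕ) :
    T.cylProb p' M (fun i v => i ≠ 0 → v ≠ [])
      ≤ T.cylProb p M (fun i v => i ≠ 0 → v ≠ []) := by
  cases M with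
  | zero => rw [cylProb_zero' T hT p', cylProb_zero' T hT p]
  | succ M =>
      rw [cylProb_eq_PS, cylProb_eq_PS, PS_succ T hT, PS_succ T hT]
      apply Finset.sum_le_sum
      intro y hy
      obtain ⟨hynbr, hyne⟩ := Finset.mem_filter.mp hy
      have hstep : T.step p' ([] : List A) y = T.step p ([] : List A) y := by
        by_cases hymem : y ∈ T.mem
        · rcases mem_nbrF_cases T hT hynbr with hc | ⟨hne, -⟩
          · rcases (mem_childF T hT).mp hc with ⟨-, a, ha, rfl⟩
            rw [show ([] : List A) ++ [a] = [a] from rfl] at *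
            rw [step_child_root T p' ha, step_child_root T p ha]
          · exact absurd rfl hne
        · rw [step_eq_zero_of_not_mem_target T p' hymem, step_eq_zero_of_not_mem_target T p hymem]
      rw [← avoidR_nil_eq_PS T hT p' M hyne, ← avoidR_nil_eq_PS T hT p M hyne, hstep]
      exact mul_le_mul_of_nonneg_left (avoidR_lam_mono T hT p hp' hpp M y)
        (step_nonneg T p (le_trans hp'.le hpp) [] y)

include hT in
lemma escProb_mono_lam {p' : ℝ} (hp' : 0 < p') (hpp : p' ≤ p) :
    T.escProb p' ≤ T.escProb p := by
  apply le_ciInf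
  intro M
  calc T.escProb p' ≤ T.cylProb p' M (fun i v => i ≠ 0 → v ≠ []) :=
        escProb_le_cylProb T hT p' hp'.le M
    _ ≤ T.cylProb p M (fun i v => i ≠ 0 → v ≠ []) := cylProb_mono_lam T hT p hp' hpp M

end CylFacts

section Continuity

variable {A : Type*} (T : RTree A) (hT : T.LocFin)

lemma continuousAt_finset_sum {ι : Type*} (s : Finset ι) (f : ι → ℝ → ℝ) (x : ℝ)
    (h : ∀ i ∈ s, ContinuousAt (f i) x) :
    ContinuousAt (fun y => ∑ i ∈ s, f i y) x := by
  classical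
  induction s using Finset.induction_on with
  | empty => simpa using continuousAt_const
  | insert _ _ hnot ih =>
      rename_i a t
      simp only [Finset.sum_insert hnot]
      exact (h a (Finset.mem_insert_self a t)).add
        (ih fun i hi => h i (Finset.mem_insert_of_mem hi))

lemma step_continuousAt {p0 : ℝ} (hp0 : 0 < p0) (x y : List A) :
    ContinuousAt (fun q => T.step q x y) p0 := by
  have hden : ContinuousAt (fun q : ℝ => 1 + (T.numChildren x : ℝ) * q) p0 :=
    (continuousAt_const.add (continuousAt_const.mul continuousAt_id))
  have hdenne : 1 + (T.numChildren x : ℝ) * p0 ≠ 0 := by positivity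
  by_cases h1 : x ∈ T.mem ∧ y ∈ T.mem
  · by_cases h2 : ∃ a : A, y = x ++ [a]
    · by_cases h3 : x = []
      · have : (fun q => T.step q x y) = fun _ => 1 / (T.numChildren x : ℝ) := by
          funext q
          unfold step
          rw [if_pos h1, if_pos h2, if_pos h3]
        rw [this]
        exact continuousAt_const
      · have : (fun q => T.step q x y)
            = fun q => q / (1 + (T.numChildren x : ℝ) * q) := by
          funext q
          unfold step
          rw [if_pos h1, if_pos h2, if_neg h3]
        rw [this]
        exact ContinuousAt.div continuousAt_id hden hdenne
    · by_cases h4 : x ≠ [] ∧ y = x.dropLast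
      · have : (fun q => T.step q x y)
            = fun q => 1 / (1 + (T.numChildren x : ℝ) * q) := by
          funext q
          unfold step
          rw [if_pos h1, if_neg h2, if_pos h4]
        rw [this]
        exact ContinuousAt.div continuousAt_const hden hdenne
      · have : (fun q => T.step q x y) = fun _ => (0:ℝ) := by
          funext q
          unfold step
          rw [if_pos h1, if_neg h2, if_neg h4]
        rw [this]
        exact continuousAt_const
  · have : (fun q => T.step q x y) = fun _ => (0:ℝ) := by
      funext q
      unfold step
      rw [if_neg h1]
    rw [this]
    exact continuousAt_const

lemma avoidR_continuousAt {p0 : ℝ} (hp0 : 0 < p0) (u : List A) :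
    ∀ (j : ℕ) (x : List A), ContinuousAt (fun q => avoidR T hT q u j x) p0 := by
  intro j
  induction j with
  | zero =>
      intro x
      rcases eq_or_ne x u with heq | hx
      · subst heq
        have : (fun q => avoidR T hT q x 0 x) = fun _ => (0:ℝ) := by
          funext q; exact avoidR_self T hT q x 0
        rw [this]; exact continuousAt_const
      · have : (fun q => avoidR T hT q u 0 x) = fun _ => (1:ℝ) := by
          funext q; exact avoidR_zero_ne T hT q hx
        rw [this]; exact continuousAt_const
  | succ j ih =>
      intro x
      rcases eq_or_ne x u with heq | hx
      · subst heq
        have : (fun q => avoidR T hT q x (j+1) x) = fun _ => (0:ℝ) := by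
          funext q; exact avoidR_self T hT q x (j+1)
        rw [this]; exact continuousAt_const
      · have : (fun q => avoidR T hT q u (j+1) x)
            = fun q => ∑ y ∈ nbrF T hT x, T.step q x y * avoidR T hT q u j y := by
          funext q; exact avoidR_succ_ne T hT q hx j
        rw [this]
        apply continuousAt_finset_sum
        intro y _
        exact (step_continuousAt T hp0 x y).mul (ih y)

include hT in
lemma cylProb_continuousAt {p0 : ℝ} (hp0 : 0 < p0) (M : ℕ) :
    ContinuousAt (fun q => T.cylProb q M (fun i v => i ≠ 0 → v ≠ [])) p0 := by
  cases M with
  | zero =>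
      have : (fun q => T.cylProb q 0 (fun i v => i ≠ 0 → v ≠ [])) = fun _ => (1:ℝ) := by
        funext q; exact cylProb_zero' T hT q
      rw [this]; exact continuousAt_const
  | succ M =>
      have : (fun q => T.cylProb q (M+1) (fun i v => i ≠ 0 → v ≠ []))
          = fun q => ∑ y ∈ (nbrF T hT ([] : List A)).filter (· ≠ []),
              T.step q [] y * avoidR T hT q [] M y := by
        funext q
        rw [cylProb_eq_PS, PS_succ T hT]
        apply Finset.sum_congr rfl
        intro y hy
        rw [avoidR_nil_eq_PS T hT q M (Finset.mem_filter.mp hy).2]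
      rw [this]
      apply continuousAt_finset_sum
      intro y _
      exact (step_continuousAt T hp0 [] y).mul (avoidR_continuousAt T hT hp0 [] M y)

end Continuity

end RTree
namespace RTree

section Subtree

variable {A : Type*} (T : RTree A) (hT : T.LocFin) (p : ℝ)

lemma mem_subtree_iff (u : List A) {z : List A} (hz : z ≠ []) :
    z ∈ (T.subtree u).mem ↔ u ++ z ∈ T.mem := by
  simp only [subtree, Set.mem_insert_iff, Set.mem_setOf_eq]
  constructor
  · rintro (h | h)
    · exact absurd h hz
    · exact h
  · exact Or.inr

include hT in
lemma subtree_locFin (u : List A) : (T.subtree u).LocFin := by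
  intro v _
  by_cases h : u ++ v ∈ T.mem
  · have hset : {a : A | v ++ [a] ∈ (T.subtree u).mem} = {a : A | (u ++ v) ++ [a] ∈ T.mem} := by
      ext a
      simp only [Set.mem_setOf_eq]
      rw [mem_subtree_iff T u (by simp), List.append_assoc]
    rw [hset]
    exact hT _ h
  · have hset : {a : A | v ++ [a] ∈ (T.subtree u).mem} = ∅ := by
      ext a
      simp only [Set.mem_setOf_eq, Set.mem_empty_iff_false, iff_false]
      intro hc
      rw [mem_subtree_iff T u (by simp), ← List.append_assoc] at hc
      exact h (T.parent_mem _ _ hc)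
    rw [hset]
    exact Set.finite_empty

lemma numChildren_subtree (u z : List A) :
    (T.subtree u).numChildren z = T.numChildren (u ++ z) := by
  unfold numChildren
  congr 1
  ext a
  simp only [Set.mem_setOf_eq]
  rw [mem_subtree_iff T u (by simp), List.append_assoc]

lemma numChildren_subtree_root (u : List A) :
    (T.subtree u).numChildren ([] : List A) = T.numChildren u := by
  rw [numChildren_subtree, List.append_nil]

lemma append_ne_self {u z : List A} (hz : z ≠ []) : u ++ z ≠ u := by
  intro h
  apply hz
  apply List.append_cancel_left (as := u)
  rw [h, List.append_nil]

lemma step_subtree {u : List A} (hune : u ≠ []) {z w : List A} (hz : z ≠ []) (hw : w ≠ []) :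
    (T.subtree u).step p z w = T.step p (u ++ z) (u ++ w) := by
  have hzz : u ++ z ≠ [] := by simp [hz]
  have hmem : (z ∈ (T.subtree u).mem ∧ w ∈ (T.subtree u).mem)
      ↔ (u ++ z ∈ T.mem ∧ u ++ w ∈ T.mem) := by
    rw [mem_subtree_iff T u hz, mem_subtree_iff T u hw]
  have hchild : (∃ a : A, w = z ++ [a]) ↔ (∃ a : A, u ++ w = (u ++ z) ++ [a]) := by
    constructor
    · rintro ⟨a, rfl⟩
      exact ⟨a, by rw [List.append_assoc]⟩
    · rintro ⟨a, ha⟩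
      rw [List.append_assoc] at ha
      exact ⟨a, List.append_cancel_left ha⟩
  have hpar : w = z.dropLast ↔ u ++ w = (u ++ z).dropLast := by
    rw [List.dropLast_append_of_ne_nil (l' := u) hz]
    constructor
    · rintro rfl; rfl
    · intro h; exact List.append_cancel_left h
  unfold step
  rw [numChildren_subtree]
  by_cases c1 : u ++ z ∈ T.mem ∧ u ++ w ∈ T.mem
  · rw [if_pos (hmem.mpr c1), if_pos c1]
    by_cases c2 : ∃ a : A, w = z ++ [a]
    · rw [if_pos c2, if_pos (hchild.mp c2), if_neg hz, if_neg hzz]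
    · rw [if_neg c2, if_neg (fun h => c2 (hchild.mpr h))]
      by_cases c4 : w = z.dropLast
      · rw [if_pos ⟨hz, c4⟩, if_pos ⟨hzz, hpar.mp c4⟩]
      · rw [if_neg (fun h => c4 h.2), if_neg (fun h => c4 (hpar.mpr h.2))]
  · rw [if_neg (fun h => c1 (hmem.mp h)), if_neg c1]

lemma childF_subtree {u z : List A} (hu : u ++ z ∈ T.mem) :
    childF T hT (u ++ z) = ((T.subtree u).childF (subtree_locFin T hT u) z).image (u ++ ·) := by
  have hzmem : z ∈ (T.subtree u).mem := by
    rcases eq_or_ne z ([] : List A) with rfl | hz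
    · exact (T.subtree u).root_mem
    · exact (mem_subtree_iff T u hz).mpr hu
  ext y
  rw [mem_childF, Finset.mem_image]
  constructor
  · rintro ⟨-, a, ha, rfl⟩
    refine ⟨z ++ [a], (mem_childF _ _).mpr ⟨hzmem, a, ?_, rfl⟩, by rw [List.append_assoc]⟩
    rw [mem_subtree_iff T u (by simp), ← List.append_assoc]
    exact ha
  · rintro ⟨w, hw, rfl⟩
    rcases (mem_childF _ _).mp hw with ⟨-, a, ha', rfl⟩
    rw [mem_subtree_iff T u (by simp), ← List.append_assoc] at ha'
    exact ⟨hu, a, ha', by rw [List.append_assoc]⟩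

lemma nbrF_subtree {u z : List A} (hune : u ≠ []) (hz : z ≠ []) (hu : u ++ z ∈ T.mem) :
    nbrF T hT (u ++ z) = ((T.subtree u).nbrF (subtree_locFin T hT u) z).image (u ++ ·) := by
  unfold nbrF
  rw [if_neg hz, if_neg (show ¬ u ++ z = [] by simp [hz])]
  rw [Finset.image_union, Finset.image_singleton, childF_subtree T hT hu,
    List.dropLast_append_of_ne_nil (l' := u) hz]

lemma avoidR_subtree {u : List A} (hune : u ≠ []) :
    ∀ (j : ℕ) {z : List A}, z ≠ [] →
      avoidR T hT p u j (u ++ z)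
        = avoidR (T.subtree u) (subtree_locFin T hT u) p [] j z := by
  intro j
  induction j with
  | zero =>
      intro z hz
      rw [avoidR_zero_ne T hT p (append_ne_self hz), avoidR_zero_ne _ _ p hz]
  | succ j ih =>
      intro z hz
      rw [avoidR_succ_ne T hT p (append_ne_self hz), avoidR_succ_ne _ _ p hz]
      by_cases hu : u ++ z ∈ T.mem
      · rw [nbrF_subtree T hT hune hz hu,
          Finset.sum_image (fun w _ w' _ h => List.append_cancel_left h)]
        apply Finset.sum_congr rfl
        intro w _
        rcases eq_or_ne w ([] : List A) with rfl | hw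
        · rw [List.append_nil, avoidR_self, avoidR_self, mul_zero, mul_zero]
        · rw [step_subtree T p hune hz hw, ih hw]
      · rw [Finset.sum_eq_zero (fun y _ => by
            rw [step_eq_zero_of_not_mem T p hu, zero_mul]),
          Finset.sum_eq_zero (fun w _ => by
            rw [step_eq_zero_of_not_mem _ p (fun hc => hu ((mem_subtree_iff T u hz).mp hc)),
              zero_mul])]

include hT in
lemma escProb_numChildren_ne_zero {q : ℝ} (hq : 0 ≤ q) (h : 0 < T.escProb q) :
    T.numChildren ([] : List A) ≠ 0 := by
  intro hk
  have hchildF : childF T hT ([] : List A) = ∅ := by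
    rw [← Finset.card_eq_zero, childF_card T hT T.root_mem, hk]
  have h1 : T.cylProb q 1 (fun i v => i ≠ 0 → v ≠ []) = 0 := by
    rw [cylProb_eq_PS, PS_succ T hT]
    apply Finset.sum_eq_zero
    intro y hy
    have := Finset.mem_filter.mp hy
    unfold nbrF at this
    rw [if_pos rfl, Finset.union_empty, hchildF] at this
    exact absurd this.1 (Finset.notMem_empty y)
  have := escProb_le_cylProb T hT q hq 1
  rw [h1] at this
  linarith

/-- The sum controlling escape into the subtree of `u`. -/
lemma child_avoid_sum_eq (hpp : 0 < p) {u : List A} (hu : u ∈ T.mem) (hune : u ≠ [])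
    (hk : T.numChildren u ≠ 0) (j : ℕ) :
    ∑ c ∈ childF T hT u, T.step p u c * avoidR T hT p u j c
      = ((T.numChildren u : ℝ) * p / (1 + (T.numChildren u : ℝ) * p))
        * ((T.subtree u).cylProb p (j+1) (fun i v => i ≠ 0 → v ≠ [])) := by
  have hT' := subtree_locFin T hT u
  rw [cylProb_eq_PS, PS_succ _ hT']
  have hnbr : ((T.subtree u).nbrF hT' ([] : List A)).filter (· ≠ [])
      = (T.subtree u).childF hT' [] := by
    unfold nbrF
    rw [if_pos rfl, Finset.union_empty]
    apply Finset.filter_true_of_mem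
    intro w hw
    rcases (mem_childF _ hT').mp hw with ⟨-, a, -, rfl⟩
    simp
  rw [hnbr]
  have himg : childF T hT u = ((T.subtree u).childF hT' []).image (u ++ ·) := by
    have h0 := childF_subtree T hT (u := u) (z := []) (by rwa [List.append_nil])
    rwa [List.append_nil] at h0
  rw [himg, Finset.sum_image (fun w _ w' _ h => List.append_cancel_left h), Finset.mul_sum]
  apply Finset.sum_congr rfl
  intro w hw
  rcases (mem_childF _ hT').mp hw with ⟨-, a, ha', rfl⟩
  have hanil : ([] : List A) ++ [a] = [a] := rfl
  rw [hanil] at *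
  have ha : u ++ [a] ∈ T.mem := by
    rw [← mem_subtree_iff T u (by simp)]
    exact ha'
  rw [step_child T p hu ha hune]
  rw [avoidR_subtree T hT p hune j (by simp : ([a] : List A) ≠ [])]
  rw [step_child_root _ p ha', numChildren_subtree_root]
  rw [← avoidR_nil_eq_PS _ hT' p j (by simp : ([a] : List A) ≠ [])]
  have hkpos : (0:ℝ) < (T.numChildren u : ℝ) := by
    have : 0 < T.numChildren u := Nat.pos_of_ne_zero hk
    exact_mod_cast this
  have hdpos : (0:ℝ) < 1 + (T.numChildren u : ℝ) * p := by positivity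
  field_simp

end Subtree

end RTree
namespace RTree

section Konig

variable {A : Type*} (T : RTree A) (hT : T.LocFin)

/-- Elements of `S` extending `x`. -/
def extSet (S : Set (List A)) (x : List A) : Set (List A) := {v ∈ S | x <+: v}

include hT in
lemma konig_step (S : Set (List A)) (hSm : S ⊆ T.mem)
    (hpc : ∀ v ∈ S, ∀ u, u <+: v → u ∈ S)
    {x : List A} (hx : x ∈ S) (hinf : (extSet S x).Infinite) :
    ∃ a : A, (x ++ [a] ∈ S ∧ (extSet S (x ++ [a])).Infinite) := by
  by_contra hcon
  push_neg at hcon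
  have hsub : extSet S x \ {x} ⊆ ⋃ a ∈ {a : A | x ++ [a] ∈ T.mem}, extSet S (x ++ [a]) := by
    rintro v ⟨⟨hvS, hxv⟩, hvne⟩
    simp only [Set.mem_singleton_iff] at hvne
    obtain ⟨t, rfl⟩ := hxv
    have htne : t ≠ [] := by rintro rfl; exact hvne (by simp)
    obtain ⟨b, t', rfl⟩ := List.exists_cons_of_ne_nil htne
    have hpre : x ++ [b] <+: x ++ (b :: t') := ⟨t', by simp⟩
    exact Set.mem_biUnion (show b ∈ {a : A | x ++ [a] ∈ T.mem} from prefix_mem T (hSm hvS) hpre)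
      ⟨hvS, hpre⟩
  have hfin : (⋃ a ∈ {a : A | x ++ [a] ∈ T.mem}, extSet S (x ++ [a])).Finite := by
    apply Set.Finite.biUnion (hT x (hSm hx))
    intro a _
    by_cases haS : x ++ [a] ∈ S
    · rw [← Set.not_infinite]
      intro hinf'
      exact hinf' ((hcon a) haS)
    · have : extSet S (x ++ [a]) = ∅ := by
        ext v
        simp only [extSet, Set.mem_setOf_eq, Set.mem_empty_iff_false, iff_false, not_and]
        intro hvS hpre
        exact absurd (hpc v hvS _ hpre) haS
      rw [this]
      exact Set.finite_empty
  apply hinf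
  have h2 : extSet S x ⊆ (⋃ a ∈ {a : A | x ++ [a] ∈ T.mem}, extSet S (x ++ [a])) ∪ {x} := by
    intro v hv
    by_cases hvx : v = x
    · exact Set.mem_union_right _ (by simp [hvx])
    · exact Set.mem_union_left _ (hsub ⟨hv, by simp [hvx]⟩)
  exact (hfin.union (Set.finite_singleton x)).subset h2

include hT in
lemma exists_ray_in (S : Set (List A)) (hSm : S ⊆ T.mem)
    (hpc : ∀ v ∈ S, ∀ u, u <+: v → u ∈ S) (hinf : S.Infinite) :
    ∃ r : ℕ → List A, T.IsRay r ∧ ∀ n, r n ∈ S := by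
  classical
  have hnil : [] ∈ S := by
    obtain ⟨v, hv⟩ := hinf.nonempty
    exact hpc v hv [] List.nil_prefix
  have hext0 : extSet S [] = S := by
    ext v
    simp [extSet, List.nil_prefix]
  have hstep : ∀ x : {x : List A // x ∈ S ∧ (extSet S x).Infinite},
      ∃ a : A, (x.1 ++ [a] ∈ S ∧ (extSet S (x.1 ++ [a])).Infinite) := by
    intro x
    exact konig_step T hT S hSm hpc x.2.1 x.2.2
  let f : {x : List A // x ∈ S ∧ (extSet S x).Infinite}
      → {x : List A // x ∈ S ∧ (extSet S x).Infinite} := fun x =>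
    ⟨x.1 ++ [Classical.choose (hstep x)], Classical.choose_spec (hstep x)⟩
  let r0 : {x : List A // x ∈ S ∧ (extSet S x).Infinite} := ⟨[], hnil, by rw [hext0]; exact hinf⟩
  let rs : ℕ → {x : List A // x ∈ S ∧ (extSet S x).Infinite} := fun n => f^[n] r0
  refine ⟨fun n => (rs n).1, ⟨?_, ?_⟩, ?_⟩
  · show (f^[0] r0).1 = []
    rw [Function.iterate_zero_apply]
  · intro n
    refine ⟨hSm (rs n).2.1, Classical.choose (hstep (rs n)), ?_⟩
    show (f^[n+1] r0).1 = _
    rw [Function.iterate_succ_apply']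
  · intro n
    exact (rs n).2.1

include hT in
lemma cutset_block_finite (c : Set (List A)) (hc : T.IsVCutset c) :
    {v ∈ T.mem | ∀ u, u <+: v → u ∉ c}.Finite := by
  by_contra hinf
  rw [← Set.not_infinite, not_not] at hinf
  obtain ⟨r, hray, hrS⟩ := exists_ray_in T hT {v ∈ T.mem | ∀ u, u <+: v → u ∉ c}
    (fun v hv => hv.1)
    (by
      rintro v ⟨hvm, hvc⟩ u huv
      exact ⟨prefix_mem T hvm huv, fun w hwu => hvc w (hwu.trans huv)⟩)
    hinf
  obtain ⟨n, hn⟩ := hc.2 r hray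
  exact (hrS n).2 (r n) (List.prefix_refl _) hn

end Konig

end RTree
namespace RTree

section Anti

variable {A : Type*} (T : RTree A) (hT : T.LocFin) (p : ℝ)

include hT in
lemma cylProb_succ_le (hp : 0 ≤ p) (M : ℕ) :
    T.cylProb p (M+1) (fun i v => i ≠ 0 → v ≠ [])
      ≤ T.cylProb p M (fun i v => i ≠ 0 → v ≠ []) := by
  cases M with
  | zero =>
      rw [cylProb_zero' T hT p, cylProb_eq_PS, PS_succ T hT]
      calc ∑ y ∈ (nbrF T hT ([]:List A)).filter (· ≠ []), T.step p [] y * PS T p 0 y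
          = ∑ y ∈ (nbrF T hT ([]:List A)).filter (· ≠ []), T.step p [] y := by
            apply Finset.sum_congr rfl
            intro y _
            rw [PS_zero T hT, mul_one]
        _ ≤ ∑ y ∈ nbrF T hT ([]:List A), T.step p [] y := by
            apply Finset.sum_le_sum_of_subset_of_nonneg (Finset.filter_subset _ _)
            intro y _ _
            exact step_nonneg T p hp [] y
        _ ≤ 1 := rowsum_le_one T hT p hp []
  | succ M =>
      rw [cylProb_eq_PS, cylProb_eq_PS, PS_succ T hT, PS_succ T hT]
      apply Finset.sum_le_sum
      intro y hy
      have hyne := (Finset.mem_filter.mp hy).2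
      rw [← avoidR_nil_eq_PS T hT p _ hyne, ← avoidR_nil_eq_PS T hT p _ hyne]
      exact mul_le_mul_of_nonneg_left (avoidR_succ_le T hT p hp [] M y)
        (step_nonneg T p hp [] y)

include hT in
lemma cylProb_anti (hp : 0 ≤ p) {N M : ℕ} (h : N ≤ M) :
    T.cylProb p M (fun i v => i ≠ 0 → v ≠ [])
      ≤ T.cylProb p N (fun i v => i ≠ 0 → v ≠ []) := by
  induction M with
  | zero => rw [Nat.le_zero.mp h]
  | succ M ih =>
      rcases Nat.lt_or_ge N (M+1) with h' | h'
      · exact le_trans (cylProb_succ_le T hT p hp M) (ih (by omega))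
      · rw [le_antisymm h h']

end Anti

section Final

variable {A : Type*}

lemma escProb_tendsto_within (T : RTree A) (hlf : T.LocFin)
    (hwut : T.WeaklyUniformlyTransient)
    (lam : ℝ) (hlam : T.lambdaC < lam) (hlam1 : lam ≤ 1) :
    Filter.Tendsto (fun x => T.escProb x) (nhdsWithin lam (Set.Iic lam))
      (nhds (T.escProb lam)) := by
  classical
  obtain ⟨c, hc, hdisj, hα⟩ := hwut
  have hbr : 0 ≤ T.br := Real.sSup_nonneg (fun x hx => le_trans zero_le_one hx.1)
  have hlc : 0 ≤ T.lambdaC := by unfold lambdaC; positivity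
  have hlam0 : 0 < lam := lt_of_le_of_lt hlc hlam
  obtain ⟨lam0, hlam0a, hlam0b⟩ : ∃ lam0, T.lambdaC < lam0 ∧ lam0 < lam :=
    ⟨(T.lambdaC + lam)/2, by linarith, by linarith⟩
  have hlam0pos : 0 < lam0 := lt_of_le_of_lt hlc hlam0a
  have hlam0le1 : lam0 ≤ 1 := le_trans hlam0b.le hlam1
  obtain ⟨α₀, hα₀pos, hα₀⟩ := hα lam0 hlam0a
  obtain ⟨β, hβdef⟩ : ∃ β : ℝ, β = min (lam0/2 * α₀) (1/2) := ⟨_, rfl⟩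
  have hβpos : 0 < β := by
    rw [hβdef]
    exact lt_min (mul_pos (by linarith) hα₀pos) (by norm_num)
  have hβnn : 0 ≤ 1 - β := by
    have : β ≤ 1/2 := hβdef ▸ min_le_right _ _
    linarith
  have hβlt1 : 1 - β < 1 := by linarith
  -- the (II) property for cutset vertices, uniformly over parameters in [lam0, lam]
  have hGOOD : ∀ x, lam0 ≤ x → x ≤ lam → ∀ u, (∃ nn, u ∈ c nn) → u ≠ [] →
      (u ∈ T.mem ∧ u ≠ [] ∧ ∀ J, 1 - avoidR T hlf x [] J u
        ≤ (1 - β) * (1 - avoidR T hlf x [] J u.dropLast)) := by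
    rintro x hx1 hx2 u ⟨nn, hun⟩ hune
    have hxpos : 0 < x := lt_of_lt_of_le hlam0pos hx1
    have hx1' : x ≤ 1 := le_trans hx2 hlam1
    have hum : u ∈ T.mem := (hc nn).1.1 u hun
    have hT' := subtree_locFin T hlf u
    have hesc0 : 0 < (T.subtree u).escProb lam0 := lt_of_lt_of_le hα₀pos (hα₀ nn u hun)
    have hk : T.numChildren u ≠ 0 := by
      have h0 := escProb_numChildren_ne_zero (T.subtree u) hT' hlam0pos.le hesc0
      rwa [numChildren_subtree_root] at h0
    refine ⟨hum, hune, ?_⟩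
    apply II_ineq T hlf x hxpos.le hum hune
    intro j
    rw [child_avoid_sum_eq T hlf x hxpos hum hune hk j]
    have hcyl : α₀ ≤ (T.subtree u).cylProb x (j+1) (fun i v => i ≠ 0 → v ≠ []) := by
      calc α₀ ≤ (T.subtree u).escProb lam0 := hα₀ nn u hun
        _ ≤ (T.subtree u).escProb x := escProb_mono_lam _ hT' x hlam0pos hx1
        _ ≤ _ := escProb_le_cylProb _ hT' x hxpos.le (j+1)
    have hk1 : (1:ℝ) ≤ (T.numChildren u : ℝ) := by
      have h1 : 1 ≤ T.numChildren u := Nat.pos_of_ne_zero hk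
      exact_mod_cast h1
    have hd : (0:ℝ) < 1 + (T.numChildren u : ℝ) * x := by positivity
    have hcoef : lam0/2 ≤ (T.numChildren u : ℝ) * x / (1 + (T.numChildren u : ℝ) * x) := by
      rw [le_div_iff₀ hd]
      nlinarith [mul_le_mul hk1 (le_refl x) hxpos.le (le_trans zero_le_one hk1)]
    calc β ≤ lam0/2 * α₀ := hβdef ▸ min_le_left _ _
      _ ≤ ((T.numChildren u:ℝ)*x/(1+(T.numChildren u:ℝ)*x))
            * ((T.subtree u).cylProb x (j+1) (fun i v => i ≠ 0 → v ≠ [])) :=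
          mul_le_mul hcoef hcyl hα₀pos.le (le_trans (by linarith) hcoef)
  -- now the metric statement
  rw [Metric.tendsto_nhdsWithin_nhds]
  intro ε hε
  obtain ⟨n, hn⟩ := exists_pow_lt_of_lt_one (show (0:ℝ) < ε/4 by linarith) hβlt1
  -- good cutset indices
  have hGcard : n ≤ ((Finset.range (n+1)).filter (fun m => ([] : List A) ∉ c m)).card := by
    have hsplit := Finset.card_filter_add_card_filter_not
      (s := Finset.range (n+1)) (p := fun m => ([] : List A) ∉ c m)
    have hbad : ((Finset.range (n+1)).filter (fun m => ¬ ([] : List A) ∉ c m)).card ≤ 1 := by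
      apply Finset.card_le_one.mpr
      intro a ha b hb
      simp only [Finset.mem_filter, not_not] at ha hb
      by_contra hab
      exact Set.disjoint_left.mp (hdisj hab) ha.2 hb.2
    rw [Finset.card_range] at hsplit
    omega
  have hBfin : (⋃ m ∈ (Finset.range (n+1)).filter (fun m => ([] : List A) ∉ c m),
      {v ∈ T.mem | ∀ u, u <+: v → u ∉ c m}).Finite :=
    Set.Finite.biUnion (Finset.finite_toSet _)
      (fun m _ => cutset_block_finite T hlf (c m) (hc m).1)
  obtain ⟨Bfin, hBfin_mem⟩ : ∃ Bfin : Finset (List A), ∀ v,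
      (v ∈ Bfin ↔ v ∈ ⋃ m ∈ (Finset.range (n+1)).filter (fun m => ([] : List A) ∉ c m),
        {v ∈ T.mem | ∀ u, u <+: v → u ∉ c m}) :=
    ⟨hBfin.toFinset, fun v => Set.Finite.mem_toFinset hBfin⟩
  -- out-of-B chain bound
  have hHout : ∀ x, lam0 ≤ x → x ≤ lam → ∀ y, y ∈ T.mem → y ∉ Bfin → y ≠ [] →
      ∀ i : ℕ, 1 - avoidR T hlf x [] i y ≤ (1-β)^n := by
    intro x hx1 hx2 y hym hyB hyne i
    have hxpos : 0 < x := lt_of_lt_of_le hlam0pos hx1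
    have hspec : ∀ m ∈ (Finset.range (n+1)).filter (fun m => ([] : List A) ∉ c m),
        ∃ u, u <+: y ∧ u ∈ c m := by
      intro m hm
      by_contra hnone
      push_neg at hnone
      apply hyB
      rw [hBfin_mem]
      exact Set.mem_biUnion hm ⟨hym, fun u hu => hnone u hu⟩
    have hScard : n ≤ (((Finset.range (n+1)).filter
        (fun m => ([] : List A) ∉ c m)).attach.image
          (fun m => Classical.choose (hspec m.1 m.2))).card := by
      rw [Finset.card_image_of_injOn, Finset.card_attach]
      · exact hGcard
      · intro m1 _ m2 _ heq
        by_contra hne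
        have hne' : m1.1 ≠ m2.1 := fun h => hne (Subtype.ext h)
        have heq2 : Classical.choose (hspec m1.1 m1.2) = Classical.choose (hspec m2.1 m2.2) := heq
        have hu1 := (Classical.choose_spec (hspec m1.1 m1.2)).2
        have hu2 := (Classical.choose_spec (hspec m2.1 m2.2)).2
        rw [heq2] at hu1
        exact Set.disjoint_left.mp (hdisj hne') hu1 hu2
    have hSmem : ∀ u ∈ ((Finset.range (n+1)).filter
        (fun m => ([] : List A) ∉ c m)).attach.image
          (fun m => Classical.choose (hspec m.1 m.2)),
        u ∈ {v : List A | (∃ nn, v ∈ c nn) ∧ v ≠ []} ∧ u <+: y := by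
      intro u hu
      rw [Finset.mem_image] at hu
      obtain ⟨m, -, rfl⟩ := hu
      obtain ⟨hpre, hmem⟩ := Classical.choose_spec (hspec m.1 m.2)
      have hmne : ([] : List A) ∉ c m.1 := (Finset.mem_filter.mp m.2).2
      refine ⟨⟨⟨m.1, hmem⟩, ?_⟩, hpre⟩
      intro h
      rw [h] at hmem
      exact hmne hmem
    have hch := chain_bound T hlf x hxpos.le β hβnn
      {v : List A | (∃ nn, v ∈ c nn) ∧ v ≠ []}
      (fun u hu => hGOOD x hx1 hx2 u hu.1 hu.2) _ _ y hym rfl hSmem i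
    calc 1 - avoidR T hlf x [] i y ≤ (1-β)^(((Finset.range (n+1)).filter
          (fun m => ([] : List A) ∉ c m)).attach.image
            (fun m => Classical.choose (hspec m.1 m.2))).card := hch
      _ ≤ (1-β)^n := pow_le_pow_of_le_one hβnn (by linarith) hScard
  -- confinement constants
  have hallmem : ∀ y ∈ Bfin.erase ([] : List A), y ∈ T.mem := by
    intro y hy
    obtain ⟨-, hyB⟩ := Finset.mem_erase.mp hy
    rw [hBfin_mem] at hyB
    obtain ⟨m, hm, hy'⟩ := Set.mem_iUnion₂.mp hyB
    exact hy'.1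
  have hallne : ∀ y ∈ Bfin.erase ([] : List A), y ≠ ([] : List A) :=
    fun y hy => (Finset.mem_erase.mp hy).1
  obtain ⟨p0, hp0def⟩ : ∃ p0 : ℝ, p0 = if h : (Bfin.erase ([] : List A)).Nonempty
      then min (1/2) ((Bfin.erase ([] : List A)).inf' h
        (fun v => 1/(1+(T.numChildren v : ℝ)))) else 1/2 := ⟨_, rfl⟩
  have hp0pos : 0 < p0 := by
    rw [hp0def]
    split
    · apply lt_min (by norm_num)
      rw [Finset.lt_inf'_iff]
      intro v _
      positivity
    · norm_num
  have hp0le1 : p0 ≤ 1 := by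
    rw [hp0def]
    split
    · exact le_trans (min_le_left _ _) (by norm_num)
    · norm_num
  have hp0step : ∀ x, 0 < x → x ≤ 1 → ∀ y ∈ Bfin.erase ([] : List A),
      p0 ≤ T.step x y y.dropLast := by
    intro x hx hx1 y hy
    have hym := hallmem y hy
    have hyne := hallne y hy
    rw [step_parent T x hym hyne]
    have h1 : p0 ≤ 1/(1+(T.numChildren y:ℝ)) := by
      rw [hp0def, dif_pos ⟨y, hy⟩]
      exact le_trans (min_le_right _ _) (Finset.inf'_le _ hy)
    have hknn : (0:ℝ) ≤ (T.numChildren y : ℝ) := Nat.cast_nonneg _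
    calc p0 ≤ 1/(1+(T.numChildren y:ℝ)) := h1
      _ ≤ 1/(1+(T.numChildren y:ℝ)*x) := by
          apply one_div_le_one_div_of_le (by positivity)
          nlinarith
  obtain ⟨R, hRdef⟩ : ∃ R : ℕ, R = (Bfin.erase ([] : List A)).sup List.length := ⟨_, rfl⟩
  have hRy : ∀ y ∈ Bfin.erase ([] : List A), y.length ≤ R :=
    fun y hy => hRdef ▸ Finset.le_sup hy
  have hδpos : 0 < p0^R := by positivity
  have hδle1 : p0^R ≤ 1 := pow_le_one₀ hp0pos.le hp0le1
  have hδnn : 0 ≤ 1 - p0^R := by linarith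
  have hδlt1 : 1 - p0^R < 1 := by linarith
  obtain ⟨mm, hmm⟩ := exists_pow_lt_of_lt_one (show (0:ℝ) < ε/4 by linarith) hδlt1
  have hconf : ∀ x, lam0 ≤ x → x ≤ lam → ∀ y,
      confR T hlf x (Bfin.erase ([] : List A)) (R*mm+1) y ≤ (1-p0^R)^mm := by
    intro x hx1 hx2 y
    have hxpos : 0 < x := lt_of_lt_of_le hlam0pos hx1
    have hx1' : x ≤ 1 := le_trans hx2 hlam1
    have hesc : ∀ z ∈ Bfin.erase ([] : List A),
        confR T hlf x (Bfin.erase ([] : List A)) R z ≤ 1 - p0^R := by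
      intro z hz
      exact confR_escape T hlf x hxpos.le (Bfin.erase ([] : List A)) hp0pos hp0le1
        hallmem hallne (fun z' hz' _ => hp0step x hxpos hx1' z' hz')
        z.length z hz rfl R (hRy z hz)
    have hpow := confR_pow T hlf x hxpos.le (Bfin.erase ([] : List A)) hδnn hesc mm
    exact confR_one_step T hlf x hxpos.le (Bfin.erase ([] : List A))
      (pow_nonneg hδnn mm) (fun z hz => hpow z hz) y
  -- main lower estimate
  have hmainx : ∀ x, lam0 ≤ x → x ≤ lam →
      T.cylProb x (R*mm+2) (fun i v => i ≠ 0 → v ≠ []) - ((1-p0^R)^mm + (1-β)^n)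
        ≤ T.escProb x := by
    intro x hx1 hx2
    have hxpos : 0 < x := lt_of_lt_of_le hlam0pos hx1
    apply le_ciInf
    intro N
    have hbnn : 0 ≤ (1-p0^R)^mm + (1-β)^n :=
      add_nonneg (pow_nonneg hδnn mm) (pow_nonneg hβnn n)
    rcases Nat.lt_or_ge N (R*mm+2) with hNM | hNM
    · have hanti := cylProb_anti T hlf x hxpos.le (le_of_lt hNM)
      linarith
    · obtain ⟨d, rfl⟩ := Nat.exists_eq_add_of_le hNM
      have hdiff : T.cylProb x (R*mm+2) (fun i v => i ≠ 0 → v ≠ [])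
          - T.cylProb x (R*mm+2+d) (fun i v => i ≠ 0 → v ≠ [])
            ≤ (1-p0^R)^mm + (1-β)^n := by
        have hM2 : R*mm+2+d = ((R*mm+1) + d) + 1 := by omega
        have hM1 : R*mm+2 = (R*mm+1) + 1 := by omega
        rw [hM1, hM2, cylProb_eq_PS, cylProb_eq_PS, PS_succ T hlf, PS_succ T hlf,
          ← Finset.sum_sub_distrib]
        have hterm : ∀ y ∈ (nbrF T hlf ([]:List A)).filter (· ≠ []),
            T.step x [] y * PS T x (R*mm+1) y - T.step x [] y * PS T x ((R*mm+1)+d) y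
              ≤ T.step x [] y * ((1-p0^R)^mm + (1-β)^n) := by
          intro y hy
          obtain ⟨hynbr, hyne⟩ := Finset.mem_filter.mp hy
          rw [← mul_sub]
          apply mul_le_mul_of_nonneg_left ?_ (step_nonneg T x hxpos.le [] y)
          have hym : y ∈ T.mem := mem_of_mem_nbrF T hlf T.root_mem hynbr
          rw [← avoidR_nil_eq_PS T hlf x _ hyne, ← avoidR_nil_eq_PS T hlf x _ hyne]
          have hmc := main_claim T hlf x hxpos.le Bfin ((1-β)^n) (pow_nonneg hβnn n)
            (fun z hz1 hz2 hz3 i => hHout x hx1 hx2 z hz1 hz2 hz3 i)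
            (R*mm+1) d y hym hyne
          have hcy := hconf x hx1 hx2 y
          linarith
        calc ∑ y ∈ (nbrF T hlf ([]:List A)).filter (· ≠ []),
              (T.step x [] y * PS T x (R*mm+1) y - T.step x [] y * PS T x ((R*mm+1)+d) y)
            ≤ ∑ y ∈ (nbrF T hlf ([]:List A)).filter (· ≠ []),
                T.step x [] y * ((1-p0^R)^mm + (1-β)^n) := Finset.sum_le_sum hterm
          _ = (∑ y ∈ (nbrF T hlf ([]:List A)).filter (· ≠ []), T.step x [] y)
                * ((1-p0^R)^mm + (1-β)^n) := (Finset.sum_mul _ _ _).symm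
          _ ≤ 1 * ((1-p0^R)^mm + (1-β)^n) := by
              apply mul_le_mul_of_nonneg_right ?_ hbnn
              calc ∑ y ∈ (nbrF T hlf ([]:List A)).filter (· ≠ []), T.step x [] y
                  ≤ ∑ y ∈ nbrF T hlf ([]:List A), T.step x [] y := by
                    apply Finset.sum_le_sum_of_subset_of_nonneg (Finset.filter_subset _ _)
                    intro y _ _
                    exact step_nonneg T x hxpos.le [] y
                _ ≤ 1 := rowsum_le_one T hlf x hxpos.le []
          _ = (1-p0^R)^mm + (1-β)^n := one_mul _
      linarith
  -- upper approximation at lam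
  obtain ⟨M', hM'⟩ : ∃ M', T.cylProb lam M' (fun i v => i ≠ 0 → v ≠ [])
      < T.escProb lam + ε/4 := by
    apply exists_lt_of_ciInf_lt
    show T.escProb lam < T.escProb lam + ε/4
    linarith
  -- continuity of the two finite-horizon functions at lam
  obtain ⟨δ1, hδ1pos, hδ1⟩ := Metric.continuousAt_iff.mp
    (cylProb_continuousAt T hlf hlam0 (R*mm+2)) (ε/4) (by linarith)
  obtain ⟨δ2, hδ2pos, hδ2⟩ := Metric.continuousAt_iff.mp
    (cylProb_continuousAt T hlf hlam0 M') (ε/4) (by linarith)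
  refine ⟨min δ1 (min δ2 (lam - lam0)), by
    apply lt_min hδ1pos
    apply lt_min hδ2pos
    linarith, ?_⟩
  intro x hxIic hxd
  have hx2 : x ≤ lam := hxIic
  have hxd1 : dist x lam < δ1 := lt_of_lt_of_le hxd (min_le_left _ _)
  have hxd2 : dist x lam < δ2 :=
    lt_of_lt_of_le hxd (le_trans (min_le_right _ _) (min_le_left _ _))
  have hxd3 : dist x lam < lam - lam0 :=
    lt_of_lt_of_le hxd (le_trans (min_le_right _ _) (min_le_right _ _))
  have hx1 : lam0 ≤ x := by
    rw [Real.dist_eq, abs_lt] at hxd3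
    linarith
  have hxpos : 0 < x := lt_of_lt_of_le hlam0pos hx1
  -- upper bound
  have hub : T.escProb x < T.escProb lam + ε/2 := by
    have h1 : T.escProb x ≤ T.cylProb x M' (fun i v => i ≠ 0 → v ≠ []) :=
      escProb_le_cylProb T hlf x hxpos.le M'
    have h2 := hδ2 hxd2
    rw [Real.dist_eq, abs_lt] at h2
    linarith
  -- lower bound
  have hlb : T.escProb lam - ε < T.escProb x := by
    have h1 := hmainx x hx1 hx2
    have h2 := hδ1 hxd1
    rw [Real.dist_eq, abs_lt] at h2
    have h3 : T.escProb lam ≤ T.cylProb lam (R*mm+2) (fun i v => i ≠ 0 → v ≠ []) :=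
      escProb_le_cylProb T hlf lam hlam0.le (R*mm+2)
    linarith
  rw [Real.dist_eq, abs_lt]
  constructor <;> linarith

end Final

end RTree
/-- For any infinite, locally finite rooted tree `T` that is weakly
uniformly transient, the function `λ ↦ C(λ,T)` is left continuous on `(λ_c(T), 1]`. -/
theorem conductance_left_continuous_of_weakly_uniformly_transient (A : Type) (T : RTree A)
    (hinf : T.mem.Infinite) (hlf : T.LocFin)
    (hwut : T.WeaklyUniformlyTransient)
    (lam : ℝ) (hlam : T.lambdaC < lam) (hlam1 : lam ≤ 1) :
    ContinuousWithinAt (fun x => T.conductance x) (Set.Iic lam) lam := by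
  have hkey : ContinuousWithinAt (fun x => T.escProb x) (Set.Iic lam) lam :=
    RTree.escProb_tendsto_within T hlf hwut lam hlam hlam1
  have h1 : ContinuousWithinAt (fun x : ℝ => x * (T.numChildren ([] : List A) : ℝ))
      (Set.Iic lam) lam := (continuous_id.mul continuous_const).continuousWithinAt
  exact h1.mul hkey
end

section
/- Fix m ∈ ℕ*. Let (f_n) be a sequence of functions in F_m and assume that f_n converges uniformly on [0,1] to a function f. Then there exists a function g ∈ F_m such that f(λ) ≤ g(λ) for every λ ∈ (0,1]. -/
open scoped Classical ENNReal
open Filter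

namespace RTreeAux

open RTree

variable {A : Type*}

/-! ### Basic facts about steps and path probabilities -/

lemma chSet_finite (T : RTree A) (hT : T.LocFin) (v : List A) :
    {a : A | v ++ [a] ∈ T.mem}.Finite := by
  by_cases hv : v ∈ T.mem
  · exact hT v hv
  · have : {a : A | v ++ [a] ∈ T.mem} = ∅ := by
      ext a
      simp only [Set.mem_setOf_eq, Set.mem_empty_iff_false, iff_false]
      exact fun h => hv (T.parent_mem v a h)
    rw [this]; exact Set.finite_empty

lemma step_nonneg (T : RTree A) {lam : ℝ} (hl : 0 ≤ lam) (x y : List A) :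
    0 ≤ T.step lam x y := by
  have hk : (0:ℝ) ≤ (T.numChildren x : ℝ) := Nat.cast_nonneg _
  have h1 : (0:ℝ) < 1 + (T.numChildren x : ℝ) * lam := by nlinarith
  unfold RTree.step
  split_ifs
  · exact div_nonneg zero_le_one hk
  · exact div_nonneg hl h1.le
  · exact div_nonneg zero_le_one h1.le
  · exact le_refl 0
  · exact le_refl 0

lemma pathProb_nonneg (T : RTree A) {lam : ℝ} (hl : 0 ≤ lam) :
    ∀ l : List (List A), 0 ≤ T.pathProb lam l
  | [] => by rw [RTree.pathProb]; norm_num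
  | [x] => by rw [RTree.pathProb]; norm_num
  | (x :: y :: r) => by
      rw [RTree.pathProb]
      exact mul_nonneg (step_nonneg T hl x y) (pathProb_nonneg T hl (y :: r))

lemma step_ne_zero_cases (T : RTree A) {lam : ℝ} {x y : List A}
    (h : T.step lam x y ≠ 0) :
    x ∈ T.mem ∧ y ∈ T.mem ∧ ((∃ a, y = x ++ [a]) ∨ (x ≠ [] ∧ y = x.dropLast)) := by
  unfold RTree.step at h
  split_ifs at h with h1 h2 h3 h4
  · exact ⟨h1.1, h1.2, Or.inl h2⟩
  · exact ⟨h1.1, h1.2, Or.inl h2⟩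
  · exact ⟨h1.1, h1.2, Or.inr h4⟩
  · exact absurd rfl h
  · exact absurd rfl h

lemma nbh_finite (T : RTree A) (lam : ℝ) (hT : T.LocFin) (v : List A) :
    {y : List A | T.step lam v y ≠ 0}.Finite := by
  apply Set.Finite.subset
    (Set.Finite.union ((chSet_finite T hT v).image (fun a => v ++ [a]))
      (Set.finite_singleton v.dropLast))
  intro y hy
  rcases step_ne_zero_cases T hy with ⟨hx, hy2, hc | hp⟩
  · rcases hc with ⟨a, rfl⟩
    exact Or.inl ⟨a, hy2, rfl⟩
  · exact Or.inr hp.2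

noncomputable def nbhF (T : RTree A) (lam : ℝ) (hT : T.LocFin) (v : List A) :
    Finset (List A) := (nbh_finite T lam hT v).toFinset

noncomputable def chF (T : RTree A) (hT : T.LocFin) (v : List A) : Finset A :=
  (chSet_finite T hT v).toFinset

lemma mem_chF {T : RTree A} {hT : T.LocFin} {v : List A} {a : A} :
    a ∈ chF T hT v ↔ v ++ [a] ∈ T.mem := by
  simp [chF, Set.Finite.mem_toFinset]

lemma mem_nbhF {T : RTree A} {lam : ℝ} {hT : T.LocFin} {v y : List A} :
    y ∈ nbhF T lam hT v ↔ T.step lam v y ≠ 0 := by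
  simp [nbhF, Set.Finite.mem_toFinset]

lemma chF_card {T : RTree A} (hT : T.LocFin) (v : List A) :
    (chF T hT v).card = T.numChildren v := by
  rw [RTree.numChildren, Set.ncard_eq_toFinset_card _ (chSet_finite T hT v)]
  rfl

/-! ### The finite set of potential paths -/

noncomputable def PF (T : RTree A) (lam : ℝ) (hT : T.LocFin) :
    ℕ → List A → Finset (List (List A))
  | 0, v => {[v]}
  | (M+1), v => (nbhF T lam hT v).biUnion (fun y => (PF T lam hT M y).image (List.cons v))

lemma PF_shape (T : RTree A) (lam : ℝ) (hT : T.LocFin) :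
    ∀ (M : ℕ) (v : List A) (l : List (List A)), l ∈ PF T lam hT M v →
      l.length = M + 1 ∧ l.head? = some v
  | 0, v, l, hl => by
      rw [PF, Finset.mem_singleton] at hl
      subst hl; exact ⟨rfl, rfl⟩
  | (M+1), v, l, hl => by
      rw [PF, Finset.mem_biUnion] at hl
      obtain ⟨y, _, hl⟩ := hl
      rw [Finset.mem_image] at hl
      obtain ⟨l', hl', rfl⟩ := hl
      have h := PF_shape T lam hT M y l' hl'
      exact ⟨by simp [h.1], rfl⟩

lemma PF_support (T : RTree A) (lam : ℝ) (hT : T.LocFin) :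
    ∀ (M : ℕ) (v : List A) (l : List (List A)), l.length = M + 1 →
      l.head? = some v → T.pathProb lam l ≠ 0 → l ∈ PF T lam hT M v
  | 0, v, l, hlen, hhead, _ => by
      obtain ⟨x, rfl⟩ := List.length_eq_one_iff.mp hlen
      simp only [List.head?] at hhead
      injection hhead with h
      subst h
      rw [PF, Finset.mem_singleton]
  | (M+1), v, l, hlen, hhead, hne => by
      match l, hlen with
      | (x :: l'), hlen =>
        simp only [List.head?] at hhead
        injection hhead with h
        subst h
        have hlen' : l'.length = M + 1 := by simpa using hlen
        match l', hlen' with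
        | (y :: r), hlen' =>
          rw [RTree.pathProb] at hne
          have hstep : T.step lam x y ≠ 0 := fun h => hne (by rw [h, zero_mul])
          have hrest : T.pathProb lam (y :: r) ≠ 0 := fun h => hne (by rw [h, mul_zero])
          rw [PF, Finset.mem_biUnion]
          exact ⟨y, mem_nbhF.mpr hstep,
            Finset.mem_image.mpr ⟨y :: r,
              PF_support T lam hT M y (y :: r) hlen' rfl hrest, rfl⟩⟩

/-! ### Finite-sum version of cylinder probabilities -/

noncomputable def FS (T : RTree A) (lam : ℝ) (hT : T.LocFin) (M : ℕ) (v : List A)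
    (Q : List (List A) → Prop) : ℝ :=
  ∑ l ∈ PF T lam hT M v, if Q l then T.pathProb lam l else 0

lemma cylProb_eq_FS (T : RTree A) (lam : ℝ) (hT : T.LocFin) (M : ℕ)
    (P : ℕ → List A → Prop) :
    T.cylProb lam M P
      = FS T lam hT M [] (fun l => ∀ (i : ℕ) (h : i < l.length), P i (l.get ⟨i, h⟩)) := by
  classical
  set S : Set (List (List A)) :=
    {l | l.length = M + 1 ∧ l.head? = some ([] : List A) ∧
      ∀ (i : ℕ) (h : i < l.length), P i (l.get ⟨i, h⟩)} with hS
  have h1 : T.cylProb lam M P = ∑' l : S, T.pathProb lam l := rfl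
  rw [h1, tsum_subtype]
  rw [tsum_eq_sum (s := PF T lam hT M []) ?_]
  · rw [FS]
    refine Finset.sum_congr rfl fun l hl => ?_
    have hs := PF_shape T lam hT M [] l hl
    by_cases hQ : ∀ (i : ℕ) (h : i < l.length), P i (l.get ⟨i, h⟩)
    · rw [if_pos hQ]
      exact Set.indicator_of_mem (show l ∈ S from ⟨hs.1, hs.2, hQ⟩) _
    · rw [if_neg hQ]
      exact Set.indicator_of_notMem (fun hls => hQ hls.2.2) _
  · intro l hl
    by_cases hls : l ∈ S
    · have hzero : T.pathProb lam l = 0 := by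
        by_contra hne
        exact hl (PF_support T lam hT M [] l hls.1 hls.2.1 hne)
      rw [Set.indicator_of_mem hls, hzero]
    · exact Set.indicator_of_notMem hls _

/-! ### Peeling the first step -/

lemma pathProb_cons (T : RTree A) (lam : ℝ) (v y : List A) (r : List (List A)) :
    T.pathProb lam (v :: y :: r) = T.step lam v y * T.pathProb lam (y :: r) := rfl

lemma FS_peel (T : RTree A) (lam : ℝ) (hT : T.LocFin) (M : ℕ) (v : List A)
    (Q Q' : List (List A) → Prop)
    (hQQ : ∀ l' : List (List A), l'.length = M + 1 → (Q (v :: l') ↔ Q' l')) :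
    FS T lam hT (M+1) v Q
      = ∑ y ∈ nbhF T lam hT v, T.step lam v y * FS T lam hT M y Q' := by
  classical
  rw [FS, PF]
  rw [Finset.sum_biUnion ?hdisj]
  case hdisj =>
    intro y1 _ y2 _ hne
    simp only [Function.onFun]
    rw [Finset.disjoint_left]
    intro l hl1 hl2
    rw [Finset.mem_image] at hl1 hl2
    obtain ⟨a1, ha1, rfl⟩ := hl1
    obtain ⟨a2, ha2, he⟩ := hl2
    have ha : a2 = a1 := by injection he
    subst ha
    have h1 := (PF_shape T lam hT M y1 a2 ha1).2
    have h2 := (PF_shape T lam hT M y2 a2 ha2).2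
    exact hne (Option.some_injective _ (h1.symm.trans h2))
  refine Finset.sum_congr rfl fun y hy => ?_
  rw [Finset.sum_image (fun x _ z _ h => by injection h)]
  rw [FS, Finset.mul_sum]
  refine Finset.sum_congr rfl fun l' hl' => ?_
  have hs := PF_shape T lam hT M y l' hl'
  obtain ⟨r, rfl⟩ : ∃ r, l' = y :: r := by
    cases l' with
    | nil => simp at hs
    | cons a r =>
        refine ⟨r, ?_⟩
        have : a = y := by
          have := hs.2
          simp only [List.head?] at this
          injection this
        rw [this]
  by_cases hq : Q' (y :: r)
  · rw [if_pos ((hQQ _ hs.1).mpr hq), if_pos hq, pathProb_cons]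
  · rw [if_neg (fun h => hq ((hQQ _ hs.1).mp h)), if_neg hq, mul_zero]

/-! ### Splitting the neighbour sum into children and parent -/

lemma sum_nbh (T : RTree A) (lam : ℝ) (hT : T.LocFin) (v : List A) (c : List A → ℝ) :
    ∑ y ∈ nbhF T lam hT v, T.step lam v y * c y
      = (∑ a ∈ chF T hT v, T.step lam v (v ++ [a]) * c (v ++ [a]))
        + T.step lam v v.dropLast * c v.dropLast := by
  classical
  have hsub : nbhF T lam hT v ⊆ ((chF T hT v).image (fun a => v ++ [a])) ∪ {v.dropLast} := by
    intro y hy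
    rcases step_ne_zero_cases T (mem_nbhF.mp hy) with ⟨hx, hy2, hc | hp⟩
    · rcases hc with ⟨a, rfl⟩
      exact Finset.mem_union_left _ (Finset.mem_image.mpr ⟨a, mem_chF.mpr hy2, rfl⟩)
    · rw [hp.2]
      exact Finset.mem_union_right _ (Finset.mem_singleton_self _)
  rw [Finset.sum_subset hsub (fun y _ hy => by
    have hz : T.step lam v y = 0 := by
      by_contra h
      exact hy (mem_nbhF.mpr h)
    rw [hz, zero_mul])]
  rw [Finset.sum_union (Finset.disjoint_singleton_right.mpr ?nd), Finset.sum_image ?inj,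
    Finset.sum_singleton]
  case nd =>
    intro hmem
    rw [Finset.mem_image] at hmem
    obtain ⟨a, _, ha⟩ := hmem
    have hlen := congrArg List.length ha
    rw [List.length_append, List.length_singleton, List.length_dropLast] at hlen
    omega
  case inj => exact fun a _ b _ h => by simpa using h

/-! ### Values of steps -/

lemma step_child (T : RTree A) (lam : ℝ) {v : List A} {a : A} (hv : v ∈ T.mem)
    (ha : v ++ [a] ∈ T.mem) :
    T.step lam v (v ++ [a])
      = if v = [] then 1 / (T.numChildren v : ℝ)
        else lam / (1 + (T.numChildren v : ℝ) * lam) := by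
  unfold RTree.step
  rw [if_pos ⟨hv, ha⟩, if_pos ⟨a, rfl⟩]

lemma dropLast_mem (T : RTree A) {v : List A} (hv : v ∈ T.mem) (hne : v ≠ []) :
    v.dropLast ∈ T.mem := by
  apply T.parent_mem v.dropLast (v.getLast hne)
  rw [List.dropLast_append_getLast hne]
  exact hv

lemma step_parent (T : RTree A) (lam : ℝ) {v : List A} (hv : v ∈ T.mem) (hne : v ≠ []) :
    T.step lam v v.dropLast = 1 / (1 + (T.numChildren v : ℝ) * lam) := by
  have hlen : 0 < v.length := List.length_pos_iff.mpr hne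
  unfold RTree.step
  rw [if_pos ⟨hv, dropLast_mem T hv hne⟩, if_neg ?h1, if_pos ⟨hne, rfl⟩]
  case h1 =>
    rintro ⟨a, ha⟩
    have hl := congrArg List.length ha
    rw [List.length_dropLast, List.length_append, List.length_singleton] at hl
    omega

lemma step_root_self (T : RTree A) (lam : ℝ) :
    T.step lam [] (([] : List A).dropLast) = 0 := by
  show T.step lam [] [] = 0
  unfold RTree.step
  by_cases hm : ([] : List A) ∈ T.mem ∧ ([] : List A) ∈ T.mem
  · rw [if_pos hm, if_neg (by rintro ⟨a, ha⟩; simp at ha),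
      if_neg (by rintro ⟨h, _⟩; exact h rfl)]
  · rw [if_neg hm]

/-! ### Base values of FS -/

lemma FS_zero_eq_one (T : RTree A) (lam : ℝ) (hT : T.LocFin) (v : List A)
    (Q : List (List A) → Prop) (hQ : Q [v]) : FS T lam hT 0 v Q = 1 := by
  rw [FS, PF, Finset.sum_singleton, if_pos hQ, RTree.pathProb]

lemma FS_root_zero (T : RTree A) (lam : ℝ) (hT : T.LocFin) (M : ℕ)
    (Q : List (List A) → Prop) (hQ : ∀ l, l.head? = some ([] : List A) → ¬ Q l) :
    FS T lam hT M [] Q = 0 := by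
  rw [FS]
  refine Finset.sum_eq_zero fun l hl => ?_
  rw [if_neg (hQ l (PF_shape T lam hT M [] l hl).2)]

/-! ### The level random-walk recursion -/

noncomputable def Rw (p : ℕ → ℝ) : ℕ → ℕ → ℝ
  | 0, _ => 1
  | (M+1), j => p j * Rw p M (j+1) + if 2 ≤ j then (1 - p j) * Rw p M (j-1) else 0

def Qall (A : Type*) : List (List A) → Prop := fun l => ∀ x ∈ l, x ≠ []

lemma FS_eq_Rw (T : RTree A) {lam : ℝ} (hT : T.LocFin) (hlam : 0 < lam)
    (κ : ℕ → ℝ) (hsym : ∀ v ∈ T.mem, (T.numChildren v : ℝ) = κ v.length)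
    (hκ : ∀ j, 1 ≤ κ j) :
    ∀ (M : ℕ) (v : List A), v ∈ T.mem → v ≠ [] →
      FS T lam hT M v (Qall A) = Rw (fun j => κ j * lam / (1 + κ j * lam)) M v.length := by
  intro M
  induction M with
  | zero =>
      intro v hv hne
      rw [Rw]
      apply FS_zero_eq_one
      intro x hx
      rw [List.mem_singleton] at hx
      subst hx
      exact hne
  | succ M ih =>
      intro v hv hne
      have hκv := hκ v.length
      have hpos : (0:ℝ) < 1 + κ v.length * lam := by nlinarith
      have hnum : (T.numChildren v : ℝ) = κ v.length := hsym v hv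
      rw [FS_peel T lam hT M v (Qall A) (Qall A)
        (fun l' _ => by simp [Qall, hne])]
      rw [sum_nbh T lam hT v (fun y => FS T lam hT M y (Qall A))]
      have hterm : ∀ a ∈ chF T hT v,
          T.step lam v (v ++ [a]) * FS T lam hT M (v ++ [a]) (Qall A)
            = lam / (1 + κ v.length * lam)
              * Rw (fun j => κ j * lam / (1 + κ j * lam)) M (v.length + 1) := by
        intro a ha
        have hmem := mem_chF.mp ha
        rw [step_child T lam hv hmem, if_neg hne, hnum,
          ih (v ++ [a]) hmem (by simp)]
        simp only [List.length_append, List.length_singleton]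
      have hchsum : (∑ a ∈ chF T hT v,
          T.step lam v (v ++ [a]) * FS T lam hT M (v ++ [a]) (Qall A))
          = κ v.length * lam / (1 + κ v.length * lam)
            * Rw (fun j => κ j * lam / (1 + κ j * lam)) M (v.length + 1) := by
        rw [Finset.sum_congr rfl hterm, Finset.sum_const, nsmul_eq_mul, chF_card,
          show ((T.numChildren v : ℕ) : ℝ) = κ v.length from hnum]
        ring
      rw [hchsum, Rw]
      by_cases hj : 2 ≤ v.length
      · have hdlen : v.dropLast.length = v.length - 1 := List.length_dropLast
        have hdne : v.dropLast ≠ [] := by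
          intro h
          rw [h] at hdlen
          simp at hdlen
          omega
        have hdmem := dropLast_mem T hv hne
        rw [step_parent T lam hv hne, hnum, ih v.dropLast hdmem hdne, hdlen]
        rw [if_pos hj]
        have h1p : (1:ℝ) - κ v.length * lam / (1 + κ v.length * lam)
            = 1 / (1 + κ v.length * lam) := by
          field_simp
          ring
        rw [h1p]
      · have hlen1 : v.length = 1 := by
          have : 0 < v.length := List.length_pos_iff.mpr hne
          omega
        have hdl : v.dropLast = [] := by
          apply List.eq_nil_of_length_eq_zero
          rw [List.length_dropLast, hlen1]
        rw [hdl, if_neg hj]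
        rw [FS_root_zero T lam hT M (Qall A)
          (fun l hl hQ => hQ [] (by
            cases l with
            | nil => simp at hl
            | cons a r =>
                have : a = [] := by
                  simp only [List.head?] at hl
                  injection hl
                rw [← this]
                exact List.mem_cons_self) rfl)]
        rw [mul_zero, add_zero]

lemma cylProb_succ_eq_Rw (T : RTree A) {lam : ℝ} (hT : T.LocFin) (hlam : 0 < lam)
    (κ : ℕ → ℝ) (hsym : ∀ v ∈ T.mem, (T.numChildren v : ℝ) = κ v.length)
    (hκ : ∀ j, 1 ≤ κ j) (M : ℕ) :
    T.cylProb lam (M+1) (fun i v => i ≠ 0 → v ≠ [])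
      = Rw (fun j => κ j * lam / (1 + κ j * lam)) M 1 := by
  rw [cylProb_eq_FS T lam hT]
  rw [FS_peel T lam hT M [] _ (Qall A) ?comp]
  case comp =>
    intro l' hlen
    constructor
    · intro h x hx
      obtain ⟨⟨i, hi⟩, rfl⟩ := List.mem_iff_get.mp hx
      have hi' : i + 1 < (([] : List A) :: l').length := by
        simp only [List.length_cons]
        omega
      exact h (i+1) hi' (Nat.succ_ne_zero i)
    · intro h i hi hi0
      cases i with
      | zero => exact absurd rfl hi0
      | succ i =>
          have hget : (([] : List A) :: l').get ⟨i+1, hi⟩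
              = l'.get ⟨i, by simpa using hi⟩ := rfl
          rw [hget]
          exact h _ (List.get_mem _ _)
  rw [sum_nbh T lam hT [] (fun y => FS T lam hT M y (Qall A))]
  rw [step_root_self, zero_mul, add_zero]
  have hnum : (T.numChildren ([] : List A) : ℝ) = κ 0 := by
    simpa using hsym [] T.root_mem
  have hκ0 : (1:ℝ) ≤ κ 0 := hκ 0
  have hterm : ∀ a ∈ chF T hT ([] : List A),
      T.step lam [] ([] ++ [a]) * FS T lam hT M ([] ++ [a]) (Qall A)
        = 1 / κ 0 * Rw (fun j => κ j * lam / (1 + κ j * lam)) M 1 := by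
    intro a ha
    have hmem := mem_chF.mp ha
    rw [step_child T lam T.root_mem hmem, if_pos rfl, hnum]
    rw [FS_eq_Rw T hT hlam κ hsym hκ M ([] ++ [a]) hmem (by simp)]
    norm_num
  rw [Finset.sum_congr rfl hterm, Finset.sum_const, nsmul_eq_mul, chF_card,
    show ((T.numChildren ([] : List A) : ℕ) : ℝ) = κ 0 from hnum]
  have hκ0ne : κ 0 ≠ 0 := by linarith
  rw [one_div, ← mul_assoc, mul_inv_cancel₀ hκ0ne, one_mul]

lemma cylProb_zero_eq_one (T : RTree A) (lam : ℝ) (hT : T.LocFin)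
    (P : ℕ → List A → Prop) (hP : P 0 ([] : List A)) :
    T.cylProb lam 0 P = 1 := by
  rw [cylProb_eq_FS T lam hT]
  apply FS_zero_eq_one
  intro i h
  have h0 : i = 0 := Nat.lt_one_iff.mp (by simpa using h)
  subst h0
  exact hP

/-! ### Basic escape probability bounds -/

lemma cylProb_nonneg (T : RTree A) {lam : ℝ} (hl : 0 ≤ lam) (M : ℕ)
    (P : ℕ → List A → Prop) : 0 ≤ T.cylProb lam M P :=
  tsum_nonneg fun l => pathProb_nonneg T hl l.1

lemma escProb_nonneg (T : RTree A) {lam : ℝ} (hl : 0 ≤ lam) : 0 ≤ T.escProb lam :=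
  le_ciInf fun M => cylProb_nonneg T hl M _

lemma escProb_le_cylProb (T : RTree A) {lam : ℝ} (hl : 0 ≤ lam) (M : ℕ) :
    T.escProb lam ≤ T.cylProb lam M (fun i v => i ≠ 0 → v ≠ []) :=
  ciInf_le ⟨0, by rintro x ⟨M', rfl⟩; exact cylProb_nonneg T hl M' _⟩ M

/-! ### Existence of vertices at each level -/

lemma take_mem (T : RTree A) : ∀ {v : List A}, v ∈ T.mem → ∀ n, v.take n ∈ T.mem := by
  intro v
  induction v using List.reverseRecOn with
  | nil => intro hv n; simpa using hv
  | append_singleton w a ihw =>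
      intro hv n
      by_cases hn : n ≤ w.length
      · rw [List.take_append_of_le_length hn]
        exact ihw (T.parent_mem w a hv) n
      · rw [List.take_of_length_le (by simp; omega)]
        exact hv

lemma level_finite (T : RTree A) (hT : T.LocFin) :
    ∀ n, {v | v ∈ T.mem ∧ v.length = n}.Finite := by
  intro n
  induction n with
  | zero =>
      apply Set.Finite.subset (Set.finite_singleton ([] : List A))
      rintro v ⟨_, hlen⟩
      simpa using List.length_eq_zero_iff.mp hlen
  | succ n ih =>
      apply Set.Finite.subset
        (ih.biUnion (fun v _ => ((chSet_finite T hT v).image (fun a => v ++ [a]))))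
      rintro w ⟨hw, hlen⟩
      have hne : w ≠ [] := by
        intro h
        subst h
        simp at hlen
      refine Set.mem_biUnion
        (show w.dropLast ∈ {v | v ∈ T.mem ∧ v.length = n} from
          ⟨dropLast_mem T hw hne, by rw [List.length_dropLast, hlen]; omega⟩) ?_
      refine ⟨w.getLast hne, ?_, List.dropLast_append_getLast hne⟩
      show w.dropLast ++ [w.getLast hne] ∈ T.mem
      rw [List.dropLast_append_getLast hne]
      exact hw

lemma exists_level (T : RTree A) (hT : T.LocFin) (hinf : T.mem.Infinite) (n : ℕ) :
    ∃ v, v ∈ T.mem ∧ v.length = n ∧ 0 < T.numChildren v := by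
  have hlong : ∃ w ∈ T.mem, n + 1 ≤ w.length := by
    by_contra h
    push_neg at h
    apply hinf
    apply Set.Finite.subset
      ((Set.finite_Iio (n+1)).biUnion (fun k _ => level_finite T hT k))
    intro w hw
    exact Set.mem_biUnion (show w.length ∈ Set.Iio (n+1) from h w hw) ⟨hw, rfl⟩
  obtain ⟨w, hw, hwl⟩ := hlong
  have hn : n < w.length := by omega
  refine ⟨w.take n, take_mem T hw n, by rw [List.length_take]; omega, ?_⟩
  rw [RTree.numChildren, Set.ncard_pos (chSet_finite T hT (w.take n))]
  refine ⟨w[n], ?_⟩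
  show w.take n ++ [w[n]] ∈ T.mem
  have : w.take (n+1) = w.take n ++ [w[n]] := by
    rw [List.take_succ]
    congr 1
    rw [List.getElem?_eq_getElem hn]
    rfl
  rw [← this]
  exact take_mem T hw (n+1)

/-! ### Analysis of the level recursion -/

lemma Rw_congr (p q : ℕ → ℝ) (h : ∀ j, 1 ≤ j → p j = q j) :
    ∀ M j, 1 ≤ j → Rw p M j = Rw q M j
  | 0, j, _ => rfl
  | (M+1), j, hj => by
      rw [Rw, Rw, h j hj, Rw_congr p q h M (j+1) (by omega)]
      by_cases h2 : 2 ≤ j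
      · rw [if_pos h2, if_pos h2, Rw_congr p q h M (j-1) (by omega)]
      · rw [if_neg h2, if_neg h2]

lemma Rw_mem (p : ℕ → ℝ) (hp : ∀ j, 0 ≤ p j ∧ p j ≤ 1) :
    ∀ M j, 0 ≤ Rw p M j ∧ Rw p M j ≤ 1
  | 0, j => ⟨zero_le_one, le_refl 1⟩
  | (M+1), j => by
      obtain ⟨h0, h1⟩ := hp j
      obtain ⟨ha0, ha1⟩ := Rw_mem p hp M (j+1)
      obtain ⟨hb0, hb1⟩ := Rw_mem p hp M (j-1)
      rw [Rw]
      by_cases h2 : 2 ≤ j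
      · rw [if_pos h2]
        constructor <;> nlinarith
      · rw [if_neg h2, add_zero]
        constructor <;> nlinarith

lemma Rw_const_mono (pb : ℝ) (hp0 : 0 ≤ pb) (hp1 : pb ≤ 1) :
    ∀ M j, 1 ≤ j → Rw (fun _ => pb) M j ≤ Rw (fun _ => pb) M (j+1)
  | 0, j, _ => le_refl 1
  | (M+1), j, hj => by
      have hR := Rw_mem (fun _ => pb) (fun _ => ⟨hp0, hp1⟩)
      rw [Rw, Rw]
      by_cases h2 : 2 ≤ j
      · rw [if_pos h2, if_pos (by omega : 2 ≤ j + 1)]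
        have e1 : j + 1 - 1 = j := by omega
        have e2 : j - 1 + 1 = j := by omega
        rw [e1]
        have ha := Rw_const_mono pb hp0 hp1 M (j+1) (by omega)
        have hb := Rw_const_mono pb hp0 hp1 M (j-1) (by omega)
        rw [e2] at hb
        nlinarith
      · have hj1 : j = 1 := by omega
        subst hj1
        rw [if_neg h2, if_pos (by omega : 2 ≤ 2), add_zero]
        have ha := Rw_const_mono pb hp0 hp1 M 2 (by omega)
        have hb := (hR M (2-1)).1
        nlinarith

lemma Rw_le_const (p : ℕ → ℝ) (pb : ℝ) (hp : ∀ j, 1 ≤ j → 0 ≤ p j ∧ p j ≤ pb)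
    (hpb1 : pb ≤ 1) (hpb0 : 0 ≤ pb) :
    ∀ M j, 1 ≤ j → Rw p M j ≤ Rw (fun _ => pb) M j
  | 0, _, _ => le_refl 1
  | (M+1), j, hj => by
      have hR := Rw_mem (fun _ => pb) (fun _ => ⟨hpb0, hpb1⟩)
      obtain ⟨hpj0, hpjb⟩ := hp j hj
      have hpj1 : p j ≤ 1 := hpjb.trans hpb1
      have ha := Rw_le_const p pb hp hpb1 hpb0 M (j+1) (by omega)
      rw [Rw, Rw]
      by_cases h2 : 2 ≤ j
      · rw [if_pos h2, if_pos h2]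
        have hb := Rw_le_const p pb hp hpb1 hpb0 M (j-1) (by omega)
        have hmono : Rw (fun _ => pb) M (j-1) ≤ Rw (fun _ => pb) M (j+1) := by
          have h1 := Rw_const_mono pb hpb0 hpb1 M (j-1) (by omega)
          have h2' := Rw_const_mono pb hpb0 hpb1 M j (by omega)
          have e2 : j - 1 + 1 = j := by omega
          rw [e2] at h1
          exact h1.trans h2'
        have k1 : p j * Rw p M (j+1) ≤ p j * Rw (fun _ => pb) M (j+1) :=
          mul_le_mul_of_nonneg_left ha hpj0
        have k2 : (1 - p j) * Rw p M (j-1) ≤ (1 - p j) * Rw (fun _ => pb) M (j-1) :=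
          mul_le_mul_of_nonneg_left hb (by linarith)
        have k3 : p j * Rw (fun _ => pb) M (j+1) + (1 - p j) * Rw (fun _ => pb) M (j-1)
            ≤ pb * Rw (fun _ => pb) M (j+1) + (1 - pb) * Rw (fun _ => pb) M (j-1) := by
          nlinarith [mul_nonneg (sub_nonneg.mpr hpjb) (sub_nonneg.mpr hmono)]
        linarith
      · rw [if_neg h2, if_neg h2, add_zero, add_zero]
        calc p j * Rw p M (j+1) ≤ p j * Rw (fun _ => pb) M (j+1) :=
              mul_le_mul_of_nonneg_left ha hpj0
          _ ≤ pb * Rw (fun _ => pb) M (j+1) :=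
              mul_le_mul_of_nonneg_right hpjb (hR M (j+1)).1

lemma Rw_const_lower (pb x : ℝ) (hx : pb * x = 1 - pb) (hx0 : 0 < x) (hpb0 : 0 ≤ pb) :
    ∀ M j, 1 ≤ j → 1 - x ^ j ≤ Rw (fun _ => pb) M j
  | 0, j, _ => by
      rw [Rw]
      nlinarith [pow_pos hx0 j]
  | (M+1), j, hj => by
      have hq0 : 0 ≤ 1 - pb := by rw [← hx]; positivity
      have ha := Rw_const_lower pb x hx hx0 hpb0 M (j+1) (by omega)
      rw [Rw]
      by_cases h2 : 2 ≤ j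
      · rw [if_pos h2]
        have hb := Rw_const_lower pb x hx hx0 hpb0 M (j-1) (by omega)
        have e2 : j - 1 + 1 = j := by omega
        have hid : pb * x^(j+1) + (1-pb) * x^(j-1) = x^j := by
          have hxj : x^j = x^(j-1) * x := by
            rw [← pow_succ, e2]
          have hxj1 : x^(j+1) = x^(j-1) * x * x := by
            rw [← pow_succ, ← pow_succ, e2]
          rw [hxj, hxj1]
          linear_combination (x^(j-1) * (x - 1)) * hx
        have k1 : pb * (1 - x^(j+1)) ≤ pb * Rw (fun _ => pb) M (j+1) :=
          mul_le_mul_of_nonneg_left ha hpb0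
        have k2 : (1-pb) * (1 - x^(j-1)) ≤ (1-pb) * Rw (fun _ => pb) M (j-1) :=
          mul_le_mul_of_nonneg_left hb hq0
        nlinarith
      · have hj1 : j = 1 := by omega
        subst hj1
        rw [if_neg h2, add_zero, pow_one]
        have hx2 : x^(1+1) = x * x := by ring
        rw [hx2] at ha
        have k1 : pb * (1 - x * x) ≤ pb * Rw (fun _ => pb) M (1+1) :=
          mul_le_mul_of_nonneg_left ha hpb0
        have hid : pb * (1 - x * x) = 1 - x := by linear_combination (1 - x) * hx
        linarith [k1, hid]

/-! ### The killed walk in a strip -/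

noncomputable def Dw (pb : ℝ) (L : ℕ) : ℕ → ℕ → ℝ
  | 0, _ => 1
  | (M+1), j => pb * (if j + 1 ≤ L - 1 then Dw pb L M (j+1) else 0)
      + (1 - pb) * (if 2 ≤ j then Dw pb L M (j-1) else 0)

lemma Dw_mem (pb : ℝ) (L : ℕ) (h0 : 0 ≤ pb) (h1 : pb ≤ 1) :
    ∀ M j, 0 ≤ Dw pb L M j ∧ Dw pb L M j ≤ 1
  | 0, j => ⟨zero_le_one, le_refl 1⟩
  | (M+1), j => by
      obtain ⟨ha0, ha1⟩ := Dw_mem pb L h0 h1 M (j+1)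
      obtain ⟨hb0, hb1⟩ := Dw_mem pb L h0 h1 M (j-1)
      rw [Dw]
      have hu0 : 0 ≤ (if j + 1 ≤ L - 1 then Dw pb L M (j+1) else 0) := by
        split_ifs <;> [exact ha0; exact le_refl 0]
      have hu1 : (if j + 1 ≤ L - 1 then Dw pb L M (j+1) else 0) ≤ 1 := by
        split_ifs <;> [exact ha1; exact zero_le_one]
      have hd0 : 0 ≤ (if 2 ≤ j then Dw pb L M (j-1) else 0) := by
        split_ifs <;> [exact hb0; exact le_refl 0]
      have hd1 : (if 2 ≤ j then Dw pb L M (j-1) else 0) ≤ 1 := by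
        split_ifs <;> [exact hb1; exact zero_le_one]
      constructor <;> nlinarith

lemma Dw_le (pb : ℝ) (L : ℕ) (h0 : 0 ≤ pb) (h1 : pb ≤ 1) :
    ∀ M j, 1 ≤ j → j ≤ M → Dw pb L M j ≤ 1 - (1-pb)^j := by
  intro M
  induction M with
  | zero => intro j hj hjM; omega
  | succ M ihM =>
      intro j hj hjM
      rw [Dw]
      have hq0 : (0:ℝ) ≤ 1 - pb := by linarith
      have hup : (if j + 1 ≤ L - 1 then Dw pb L M (j+1) else 0) ≤ 1 := by
        split_ifs with h
        · exact (Dw_mem pb L h0 h1 M (j+1)).2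
        · exact zero_le_one
      have hup0 : 0 ≤ (if j + 1 ≤ L - 1 then Dw pb L M (j+1) else 0) := by
        split_ifs with h
        · exact (Dw_mem pb L h0 h1 M (j+1)).1
        · exact le_refl 0
      by_cases h2 : 2 ≤ j
      · rw [if_pos h2]
        have hb := ihM (j-1) (by omega) (by omega)
        have e : (1-pb)^j = (1-pb)^(j-1) * (1-pb) := by
          rw [← pow_succ]
          congr 1
          omega
        have k1 : pb * (if j + 1 ≤ L - 1 then Dw pb L M (j+1) else 0) ≤ pb :=
          by nlinarith
        have k2 : (1-pb) * Dw pb L M (j-1) ≤ (1-pb) * (1 - (1-pb)^(j-1)) :=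
          mul_le_mul_of_nonneg_left hb hq0
        nlinarith [pow_nonneg hq0 (j-1)]
      · have hj1 : j = 1 := by omega
        subst hj1
        rw [if_neg h2, mul_zero, add_zero, pow_one]
        nlinarith

lemma Dw_submul (pb : ℝ) (L c : ℕ) (B : ℝ) (h0 : 0 ≤ pb) (h1 : pb ≤ 1) (hB : 0 ≤ B)
    (hc : ∀ j, 1 ≤ j → j ≤ L - 1 → Dw pb L c j ≤ B) :
    ∀ a j, 1 ≤ j → j ≤ L - 1 → Dw pb L (a + c) j ≤ B * Dw pb L a j := by
  intro a
  induction a with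
  | zero =>
      intro j hj hjL
      rw [zero_add]
      have : Dw pb L 0 j = 1 := rfl
      rw [this, mul_one]
      exact hc j hj hjL
  | succ a ihA =>
      intro j hj hjL
      have e : a + 1 + c = (a + c) + 1 := by omega
      rw [e, Dw, Dw]
      have hq0 : (0:ℝ) ≤ 1 - pb := by linarith
      have hup : (if j + 1 ≤ L - 1 then Dw pb L (a+c) (j+1) else 0)
          ≤ B * (if j + 1 ≤ L - 1 then Dw pb L a (j+1) else 0) := by
        split_ifs with h
        · exact ihA (j+1) (by omega) h
        · rw [mul_zero]
      have hdown : (if 2 ≤ j then Dw pb L (a+c) (j-1) else 0)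
          ≤ B * (if 2 ≤ j then Dw pb L a (j-1) else 0) := by
        split_ifs with h
        · exact ihA (j-1) (by omega) (by omega)
        · rw [mul_zero]
      have k1 := mul_le_mul_of_nonneg_left hup h0
      have k2 := mul_le_mul_of_nonneg_left hdown hq0
      nlinarith

/-! ### Partial geometric sums -/

noncomputable def gpart (x : ℝ) (j : ℕ) : ℝ := ∑ i ∈ Finset.range j, x ^ i

lemma gpart_succ (x : ℝ) (j : ℕ) : gpart x (j+1) = gpart x j + x^j :=
  Finset.sum_range_succ _ _

lemma gpart_nonneg (x : ℝ) (hx : 0 ≤ x) (j : ℕ) : 0 ≤ gpart x j :=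
  Finset.sum_nonneg fun i _ => pow_nonneg hx i

lemma gpart_pos (x : ℝ) (hx : 0 < x) (j : ℕ) (hj : 1 ≤ j) : 0 < gpart x j :=
  Finset.sum_pos (fun i _ => pow_pos hx i) (Finset.nonempty_range_iff.mpr (by omega))

lemma gpart_one (x : ℝ) : gpart x 1 = 1 := by simp [gpart]

lemma Rw_const_upper (pb x : ℝ) (L : ℕ) (hL : 2 ≤ L) (hx : pb * x = 1 - pb) (hx0 : 0 < x)
    (hpb0 : 0 ≤ pb) (hpb1 : pb ≤ 1) :
    ∀ M j, 1 ≤ j → j ≤ L - 1 →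
      Rw (fun _ => pb) M j ≤ gpart x j / gpart x L + Dw pb L M j := by
  intro M
  induction M with
  | zero =>
      intro j hj hjL
      have h1 : Rw (fun _ => pb) 0 j = 1 := rfl
      have h2 : Dw pb L 0 j = 1 := rfl
      rw [h1, h2]
      have := div_nonneg (gpart_nonneg x hx0.le j) (gpart_nonneg x hx0.le L)
      linarith
  | succ M ihM =>
      intro j hj hjL
      have hgL : 0 < gpart x L := gpart_pos x hx0 L (by omega)
      have hq0 : (0:ℝ) ≤ 1 - pb := by rw [← hx]; positivity
      rw [Rw, Dw]
      have hup : Rw (fun _ => pb) M (j+1)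
          ≤ gpart x (j+1) / gpart x L + (if j+1 ≤ L-1 then Dw pb L M (j+1) else 0) := by
        by_cases h : j + 1 ≤ L - 1
        · rw [if_pos h]
          exact ihM (j+1) (by omega) h
        · rw [if_neg h, add_zero]
          have hjL1 : j + 1 = L := by omega
          rw [hjL1, div_self hgL.ne']
          exact (Rw_mem (fun _ => pb) (fun _ => ⟨hpb0, hpb1⟩) M L).2
      have k1 : pb * Rw (fun _ => pb) M (j+1)
          ≤ pb * (gpart x (j+1) / gpart x L)
            + pb * (if j+1 ≤ L-1 then Dw pb L M (j+1) else 0) := by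
        have := mul_le_mul_of_nonneg_left hup hpb0
        nlinarith
      by_cases h2 : 2 ≤ j
      · rw [if_pos h2, if_pos h2]
        have hdown := ihM (j-1) (by omega) (by omega)
        have e2 : j - 1 + 1 = j := by omega
        have hnum : pb * gpart x (j+1) + (1-pb) * gpart x (j-1) = gpart x j := by
          have e1 : gpart x (j+1) = gpart x j + x^j := gpart_succ x j
          have e2' : gpart x j = gpart x (j-1) + x^(j-1) := by
            conv_lhs => rw [← e2]
            exact gpart_succ x (j-1)
          have e3 : pb * x^j = (1-pb) * x^(j-1) := by
            have hxj : x^j = x^(j-1) * x := by rw [← pow_succ, e2]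
            rw [hxj, ← hx]
            ring
          have e4 : gpart x (j-1) = gpart x j - x^(j-1) := by linarith
          rw [e1, e4]
          nlinarith [e3]
        have harm : pb * (gpart x (j+1) / gpart x L) + (1-pb) * (gpart x (j-1) / gpart x L)
            = gpart x j / gpart x L := by
          rw [show pb * (gpart x (j+1) / gpart x L) + (1-pb) * (gpart x (j-1) / gpart x L)
            = (pb * gpart x (j+1) + (1-pb) * gpart x (j-1)) / gpart x L from by ring]
          rw [hnum]
        have k2 : (1-pb) * Rw (fun _ => pb) M (j-1)
            ≤ (1-pb) * (gpart x (j-1) / gpart x L) + (1-pb) * Dw pb L M (j-1) := by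
          have := mul_le_mul_of_nonneg_left hdown hq0
          nlinarith
        linarith
      · have hj1 : j = 1 := by omega
        subst hj1
        rw [if_neg h2, if_neg h2, add_zero, mul_zero, add_zero]
        have hg2 : pb * gpart x 2 = 1 := by
          have hgg : gpart x 2 = 1 + x := by
            rw [show (2:ℕ) = 1 + 1 from rfl, gpart_succ, gpart_one, pow_one]
          rw [hgg]
          nlinarith [hx]
        have hsplit : pb * (gpart x (1+1) / gpart x L) = gpart x 1 / gpart x L := by
          rw [gpart_one, show pb * (gpart x (1+1) / gpart x L)
            = (pb * gpart x 2) / gpart x L from by norm_num; ring]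
          rw [hg2]
        linarith [k1, hsplit.le, hsplit.ge]

/-! ### Limit of the upper bounds -/

lemma upper_bound_from_Rw (pb x : ℝ) (hx : pb * x = 1 - pb) (hx0 : 0 < x)
    (hpb0 : 0 < pb) (hpb1 : pb < 1) {E : ℝ}
    (hE : ∀ M, E ≤ Rw (fun _ => pb) M 1) : E ≤ max 0 (1 - x) := by
  have hq0 : (0:ℝ) < 1 - pb := by linarith
  have hstep : ∀ L : ℕ, 2 ≤ L → E ≤ 1 / gpart x L := by
    intro L hL
    have hgL : 0 < gpart x L := gpart_pos x hx0 L (by omega)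
    set B : ℝ := 1 - (1 - pb)^(L-1) with hB
    have hqpow : 0 < (1-pb)^(L-1) := pow_pos hq0 _
    have hqpow1 : (1-pb)^(L-1) ≤ 1 := pow_le_one₀ (by linarith) (by linarith)
    have hB0 : 0 ≤ B := by rw [hB]; linarith
    have hB1 : B < 1 := by rw [hB]; linarith
    have hDc : ∀ j, 1 ≤ j → j ≤ L - 1 → Dw pb L (L-1) j ≤ B := by
      intro j hj hjL
      calc Dw pb L (L-1) j ≤ 1 - (1-pb)^j := Dw_le pb L hpb0.le hpb1.le (L-1) j hj (by omega)
        _ ≤ B := by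
            have hmp : (1-pb)^(L-1) ≤ (1-pb)^j :=
              pow_le_pow_of_le_one (by linarith) (by linarith) (by omega)
            rw [hB]; linarith
    have hDn : ∀ n : ℕ, Dw pb L (n * (L-1)) 1 ≤ B ^ n := by
      intro n
      induction n with
      | zero =>
          rw [Nat.zero_mul, pow_zero]
          exact le_of_eq rfl
      | succ n ihn =>
          have e : (n+1) * (L-1) = n * (L-1) + (L-1) := by ring
          rw [e]
          calc Dw pb L (n*(L-1) + (L-1)) 1 ≤ B * Dw pb L (n*(L-1)) 1 :=
              Dw_submul pb L (L-1) B hpb0.le hpb1.le hB0 hDc (n*(L-1)) 1 le_rfl (by omega)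
            _ ≤ B * B^n := mul_le_mul_of_nonneg_left ihn hB0
            _ = B^(n+1) := by ring
    have hEn : ∀ n : ℕ, E ≤ 1 / gpart x L + B ^ n := by
      intro n
      calc E ≤ Rw (fun _ => pb) (n * (L-1)) 1 := hE _
        _ ≤ gpart x 1 / gpart x L + Dw pb L (n*(L-1)) 1 :=
            Rw_const_upper pb x L hL hx hx0 hpb0.le hpb1.le (n*(L-1)) 1 le_rfl (by omega)
        _ ≤ 1 / gpart x L + B ^ n := by
            rw [gpart_one]
            exact add_le_add le_rfl (hDn n)
    have hlim : Filter.Tendsto (fun n : ℕ => 1 / gpart x L + B ^ n) Filter.atTop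
        (nhds (1 / gpart x L + 0)) :=
      Filter.Tendsto.const_add _ (tendsto_pow_atTop_nhds_zero_of_lt_one hB0 hB1)
    have := ge_of_tendsto' hlim hEn
    linarith
  by_cases hx1 : x < 1
  · have hgeom : Filter.Tendsto (fun L : ℕ => gpart x L) Filter.atTop (nhds (1 - x)⁻¹) :=
      (hasSum_geometric_of_lt_one hx0.le hx1).tendsto_sum_nat
    have hne : (1 - x)⁻¹ ≠ 0 := inv_ne_zero (by linarith)
    have hinv : Filter.Tendsto (fun L : ℕ => 1 / gpart x L) Filter.atTop (nhds (1 - x)) := by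
      have := hgeom.inv₀ hne
      simpa [one_div, inv_inv] using this
    have hEle : E ≤ 1 - x := by
      apply ge_of_tendsto hinv
      filter_upwards [Filter.eventually_ge_atTop 2] with L hL
      exact hstep L hL
    exact hEle.trans (le_max_right _ _)
  · push_neg at hx1
    have hL1 : ∀ L : ℕ, (L : ℝ) ≤ gpart x L := by
      intro L
      calc (L:ℝ) = ∑ _i ∈ Finset.range L, (1:ℝ) := by simp
        _ ≤ gpart x L := Finset.sum_le_sum fun i _ => one_le_pow₀ hx1
    have hEL : ∀ L : ℕ, 2 ≤ L → E ≤ 1 / (L:ℝ) := by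
      intro L hL
      have hLpos : (0:ℝ) < L := by
        have : (2:ℝ) ≤ L := by exact_mod_cast hL
        linarith
      exact (hstep L hL).trans (one_div_le_one_div_of_le hLpos (hL1 L))
    have hE0 : E ≤ 0 := by
      apply ge_of_tendsto tendsto_one_div_atTop_nhds_zero_nat
      filter_upwards [Filter.eventually_ge_atTop 2] with L hL using hEL L hL
    exact hE0.trans (le_max_left _ _)

/-! ### The maximal spherically symmetric tree of degree `m` -/

def chiF (m j : ℕ) : ℕ := if j = 0 then m else m - 1

def Tmax (m : ℕ) : RTree ℕ where
  mem := {l : List ℕ | ∀ (i : ℕ) (h : i < l.length), l.get ⟨i, h⟩ < chiF m i}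
  root_mem := by intro i h; simp at h
  parent_mem := by
    intro v a hv i h
    have h' : i < (v ++ [a]).length := by
      rw [List.length_append, List.length_singleton]; omega
    have hlt := hv i h'
    have heq : (v ++ [a]).get ⟨i, h'⟩ = v.get ⟨i, h⟩ := by
      rw [List.get_eq_getElem, List.get_eq_getElem]
      exact List.getElem_append_left h
    rwa [heq] at hlt

lemma Tmax_append_mem {m : ℕ} {v : List ℕ} (hv : v ∈ (Tmax m).mem) (a : ℕ) :
    v ++ [a] ∈ (Tmax m).mem ↔ a < chiF m v.length := by
  constructor
  · intro h
    have hl : v.length < (v ++ [a]).length := by simp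
    have hlt := h v.length hl
    rw [List.get_eq_getElem] at hlt
    rwa [List.getElem_concat_length rfl _] at hlt
  · intro ha i h
    have hlen : i < v.length + 1 := by
      rw [List.length_append, List.length_singleton] at h; omega
    by_cases hi : i < v.length
    · have heq : (v ++ [a]).get ⟨i, h⟩ = v.get ⟨i, hi⟩ := by
        rw [List.get_eq_getElem, List.get_eq_getElem]
        exact List.getElem_append_left hi
      rw [heq]
      exact hv i hi
    · have hiv : i = v.length := by omega
      subst hiv
      have heq : (v ++ [a]).get ⟨v.length, h⟩ = a := by
        rw [List.get_eq_getElem]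
        exact List.getElem_concat_length rfl _
      rw [heq]
      exact ha

lemma Tmax_chSet {m : ℕ} {v : List ℕ} (hv : v ∈ (Tmax m).mem) :
    {a : ℕ | v ++ [a] ∈ (Tmax m).mem} = Set.Iio (chiF m v.length) := by
  ext a
  simp only [Set.mem_setOf_eq, Set.mem_Iio]
  exact Tmax_append_mem hv a

lemma Tmax_numChildren {m : ℕ} {v : List ℕ} (hv : v ∈ (Tmax m).mem) :
    (Tmax m).numChildren v = chiF m v.length := by
  rw [RTree.numChildren, Tmax_chSet hv, ← Finset.coe_range, Set.ncard_coe_finset,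
    Finset.card_range]

lemma Tmax_locFin (m : ℕ) : (Tmax m).LocFin := by
  intro v hv
  rw [Tmax_chSet hv]
  exact Set.finite_Iio _

lemma Tmax_replicate_mem (m : ℕ) (hm2 : 2 ≤ m) (n : ℕ) :
    List.replicate n 0 ∈ (Tmax m).mem := by
  intro i h
  rw [List.get_eq_getElem, List.getElem_replicate]
  rw [chiF]
  split_ifs <;> omega

lemma MemAm_Tmax (m : ℕ) (hm2 : 2 ≤ m) : MemAm m (Tmax m) := by
  refine ⟨?_, Tmax_locFin m, ?_, ?_⟩
  · exact Set.infinite_of_injective_forall_mem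
      (f := fun n : ℕ => List.replicate n 0)
      (fun a b h => by simpa using congrArg List.length h)
      (Tmax_replicate_mem m hm2)
  · intro v hv w hw hlen
    rw [Tmax_numChildren hv, Tmax_numChildren hw, hlen]
  · intro v hv
    rw [RTree.degree, Tmax_numChildren hv]
    by_cases hv0 : v = []
    · subst hv0
      simp [chiF]
    · rw [if_neg hv0, chiF, if_neg (by simpa [List.length_eq_zero_iff] using hv0)]
      omega

/-! ### Conductance bounds -/

lemma escProb_le_max (m : ℕ) (hm2 : 2 ≤ m) (T : RTree ℕ) (hTm : MemAm m T)
    {lam : ℝ} (hlam : lam ∈ Set.Ioc (0:ℝ) 1) :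
    T.escProb lam ≤ max 0 (1 - 1/(((m:ℝ) - 1) * lam)) := by
  obtain ⟨hinf, hLF, hsym, hdeg⟩ := hTm
  obtain ⟨hl0, hl1⟩ := hlam
  have hwit : ∀ j : ℕ, ∃ v, v ∈ T.mem ∧ v.length = j ∧ 0 < T.numChildren v :=
    fun j => exists_level T hLF hinf j
  choose w hw1 hw2 hw3 using hwit
  set κ : ℕ → ℝ := fun j => (T.numChildren (w j) : ℝ) with hκdef
  have hsym' : ∀ v ∈ T.mem, (T.numChildren v : ℝ) = κ v.length := by
    intro v hv
    show (T.numChildren v : ℝ) = (T.numChildren (w v.length) : ℝ)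
    exact_mod_cast hsym v hv (w v.length) (hw1 v.length) ((hw2 v.length).symm)
  have hκ1 : ∀ j, 1 ≤ κ j := by
    intro j
    show (1:ℝ) ≤ (T.numChildren (w j) : ℝ)
    exact_mod_cast hw3 j
  have hm2' : (2:ℝ) ≤ (m:ℝ) := by exact_mod_cast hm2
  have hb1 : 1 ≤ (m:ℝ) - 1 := by linarith
  have hκb : ∀ j, 1 ≤ j → κ j ≤ (m:ℝ) - 1 := by
    intro j hj
    have hne : w j ≠ [] := by
      intro h
      have hl := hw2 j
      rw [h] at hl
      simp at hl
      omega
    have hd := hdeg (w j) (hw1 j)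
    rw [RTree.degree, if_neg hne] at hd
    have hn : T.numChildren (w j) ≤ m - 1 := by omega
    show (T.numChildren (w j) : ℝ) ≤ (m:ℝ) - 1
    have hc : ((T.numChildren (w j) : ℕ) : ℝ) ≤ ((m - 1 : ℕ) : ℝ) := by exact_mod_cast hn
    have he : ((m - 1 : ℕ) : ℝ) = (m:ℝ) - 1 := by
      push_cast [Nat.cast_sub (by omega : 1 ≤ m)]
      ring
    linarith
  set bb : ℝ := (m:ℝ) - 1 with hbbdef
  have hblam : 0 < bb * lam := by nlinarith
  have hden : 0 < 1 + bb * lam := by linarith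
  set pb : ℝ := bb * lam / (1 + bb * lam) with hpbdef
  have hpb0 : 0 < pb := by rw [hpbdef]; exact div_pos hblam hden
  have hpb1 : pb < 1 := by
    rw [hpbdef, div_lt_one hden]
    linarith
  set x : ℝ := 1 / (bb * lam) with hxdef
  have hx0 : 0 < x := by rw [hxdef]; exact one_div_pos.mpr hblam
  have hx : pb * x = 1 - pb := by
    rw [hpbdef, hxdef]
    have h1 : bb * lam ≠ 0 := ne_of_gt hblam
    have h2 : (1 + bb * lam) ≠ 0 := ne_of_gt hden
    field_simp
    ring
  set p : ℕ → ℝ := fun j => κ j * lam / (1 + κ j * lam) with hpdef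
  have hp : ∀ j, 1 ≤ j → 0 ≤ p j ∧ p j ≤ pb := by
    intro j hj
    have hκj := hκ1 j
    have hκbj := hκb j hj
    have hdenj : 0 < 1 + κ j * lam := by nlinarith
    constructor
    · show 0 ≤ κ j * lam / (1 + κ j * lam)
      exact div_nonneg (by nlinarith) hdenj.le
    · show κ j * lam / (1 + κ j * lam) ≤ pb
      rw [hpbdef, div_le_div_iff₀ hdenj hden]
      nlinarith [mul_le_mul_of_nonneg_right hκbj hl0.le]
  apply upper_bound_from_Rw pb x hx hx0 hpb0 hpb1
  intro M
  calc T.escProb lam ≤ T.cylProb lam (M+1) (fun i v => i ≠ 0 → v ≠ []) :=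
      escProb_le_cylProb T hl0.le (M+1)
    _ = Rw p M 1 := cylProb_succ_eq_Rw T hLF hl0 κ hsym' hκ1 M
    _ ≤ Rw (fun _ => pb) M 1 := Rw_le_const p pb hp hpb1.le hpb0.le M 1 le_rfl

lemma Tmax_escProb (m : ℕ) (hm2 : 2 ≤ m) {lam : ℝ} (hlam : lam ∈ Set.Ioc (0:ℝ) 1) :
    (Tmax m).escProb lam = max 0 (1 - 1/(((m:ℝ) - 1) * lam)) := by
  obtain ⟨hl0, hl1⟩ := hlam
  apply le_antisymm (escProb_le_max m hm2 (Tmax m) (MemAm_Tmax m hm2) ⟨hl0, hl1⟩)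
  -- lower bound
  have hm2' : (2:ℝ) ≤ (m:ℝ) := by exact_mod_cast hm2
  set bb : ℝ := (m:ℝ) - 1 with hbbdef
  have hbb1 : 1 ≤ bb := by rw [hbbdef]; linarith
  have hblam : 0 < bb * lam := by nlinarith
  have hden : 0 < 1 + bb * lam := by linarith
  set pb : ℝ := bb * lam / (1 + bb * lam) with hpbdef
  have hpb0 : 0 ≤ pb := by rw [hpbdef]; exact (div_pos hblam hden).le
  have hpb1 : pb ≤ 1 := by
    rw [hpbdef, div_le_one hden]
    linarith
  set x : ℝ := 1 / (bb * lam) with hxdef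
  have hx0 : 0 < x := by rw [hxdef]; exact one_div_pos.mpr hblam
  have hx : pb * x = 1 - pb := by
    rw [hpbdef, hxdef]
    have h1 : bb * lam ≠ 0 := ne_of_gt hblam
    have h2 : (1 + bb * lam) ≠ 0 := ne_of_gt hden
    field_simp
    ring
  set κ : ℕ → ℝ := fun j => (chiF m j : ℝ) with hκdef
  have hsym' : ∀ v ∈ (Tmax m).mem, ((Tmax m).numChildren v : ℝ) = κ v.length := by
    intro v hv
    rw [Tmax_numChildren hv]
  have hκ1 : ∀ j, 1 ≤ κ j := by
    intro j
    show (1:ℝ) ≤ ((chiF m j : ℕ) : ℝ)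
    have h1 : 1 ≤ chiF m j := by
      rw [chiF]; split_ifs <;> omega
    exact_mod_cast h1
  set p : ℕ → ℝ := fun j => κ j * lam / (1 + κ j * lam) with hpdef
  have hpeq : ∀ j, 1 ≤ j → p j = pb := by
    intro j hj
    have hcj : κ j = bb := by
      show ((chiF m j : ℕ) : ℝ) = bb
      rw [chiF, if_neg (by omega), hbbdef]
      push_cast [Nat.cast_sub (by omega : 1 ≤ m)]
      ring
    show κ j * lam / (1 + κ j * lam) = pb
    rw [hcj, hpbdef]
  apply le_ciInf
  intro M
  cases M with
  | zero =>
      rw [cylProb_zero_eq_one (Tmax m) lam (Tmax_locFin m) _ (fun h => absurd rfl h)]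
      apply max_le zero_le_one
      linarith [hx0]
  | succ M =>
      rw [cylProb_succ_eq_Rw (Tmax m) (Tmax_locFin m) hl0 κ hsym' hκ1 M]
      rw [Rw_congr p (fun _ => pb) hpeq M 1 le_rfl]
      apply max_le
      · exact (Rw_mem (fun _ => pb) (fun _ => ⟨hpb0, hpb1⟩) M 1).1
      · have hlow := Rw_const_lower pb x hx hx0 hpb0 M 1 le_rfl
        rw [pow_one] at hlow
        linarith [hlow]

lemma mul_max0 (a c : ℝ) (ha : 0 ≤ a) : a * max 0 c = max 0 (a * c) := by
  rcases le_total c 0 with h | h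
  · rw [max_eq_left h, mul_zero, max_eq_left (by nlinarith : a * c ≤ 0)]
  · rw [max_eq_right h, max_eq_right (mul_nonneg ha h)]

lemma algebra_max (m : ℕ) (hm2 : 2 ≤ m) {lam : ℝ} (hl0 : 0 < lam) :
    lam * (m:ℝ) * max 0 (1 - 1/(((m:ℝ)-1)*lam)) = (m:ℝ) * max 0 (lam - 1/((m:ℝ)-1)) := by
  have hm2' : (2:ℝ) ≤ (m:ℝ) := by exact_mod_cast hm2
  have hb : (0:ℝ) < (m:ℝ) - 1 := by linarith
  rw [mul_max0 _ _ (by positivity : (0:ℝ) ≤ lam * (m:ℝ)),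
    mul_max0 _ _ (by positivity : (0:ℝ) ≤ (m:ℝ))]
  congr 1
  field_simp

lemma Tmax_conductance (m : ℕ) (hm2 : 2 ≤ m) {lam : ℝ} (hlam : lam ∈ Set.Ioc (0:ℝ) 1) :
    (Tmax m).conductance lam = (m:ℝ) * max 0 (lam - 1/((m:ℝ)-1)) := by
  rw [RTree.conductance, Tmax_escProb m hm2 hlam]
  have hch : (Tmax m).numChildren ([] : List ℕ) = m := by
    rw [Tmax_numChildren (Tmax m).root_mem]
    simp [chiF]
  rw [hch]
  exact algebra_max m hm2 hlam.1

end RTreeAux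

/-- Fix `m ∈ ℕ*`. If a sequence of functions of `F_m` converges
uniformly on `[0,1]` to a function `f`, then there is `g ∈ F_m` dominating `f`
on `(0,1]`. -/
theorem uniform_limit_dominated_by_Fm (m : ℕ) (hm : 0 < m)
    (fseq : ℕ → (ℝ → ℝ)) (f : ℝ → ℝ)
    (hmem : ∀ n, fseq n ∈ Fm m)
    (hunif : TendstoUniformlyOn fseq f Filter.atTop (Set.Icc 0 1)) :
    ∃ g ∈ Fm m, ∀ lam ∈ Set.Ioc (0 : ℝ) 1, f lam ≤ g lam := by
  classical
  obtain ⟨hcont0, T0, hT0, heq0⟩ := hmem 0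
  have hm2 : 2 ≤ m := by
    by_contra hcon
    have hm1 : m = 1 := by omega
    obtain ⟨hinf, hLF, hsymm, hdeg⟩ := hT0
    obtain ⟨v, hv, hvlen, hvnum⟩ := RTreeAux.exists_level T0 hLF hinf 1
    have hne : v ≠ [] := by
      intro h
      rw [h] at hvlen
      simp at hvlen
    have hd := hdeg v hv
    rw [RTree.degree, if_neg hne, hm1] at hd
    omega
  refine ⟨fun t => (m:ℝ) * max 0 (t - 1/((m:ℝ)-1)), ⟨?_, RTreeAux.Tmax m,
    RTreeAux.MemAm_Tmax m hm2, fun lam hlam => (RTreeAux.Tmax_conductance m hm2 hlam).symm⟩, ?_⟩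
  · exact (continuous_const.mul
      (Continuous.max continuous_const (continuous_id.sub continuous_const))).continuousOn
  · intro lam hlam
    have htend := hunif.tendsto_at (Set.Ioc_subset_Icc_self hlam)
    refine le_of_tendsto htend (Filter.Eventually.of_forall fun n => ?_)
    show fseq n lam ≤ (m:ℝ) * max 0 (lam - 1/((m:ℝ)-1))
    obtain ⟨hcontn, T, hT, heqn⟩ := hmem n
    rw [heqn lam hlam]
    obtain ⟨hinf, hLF, hsymm, hdeg⟩ := hT
    have hesc := RTreeAux.escProb_le_max m hm2 T ⟨hinf, hLF, hsymm, hdeg⟩ hlam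
    have hesc0 := RTreeAux.escProb_nonneg T hlam.1.le
    have hroot : (T.numChildren ([] : List ℕ) : ℝ) ≤ m := by
      have hd := hdeg [] T.root_mem
      rw [RTree.degree, if_pos rfl, add_zero] at hd
      exact_mod_cast hd
    have hroot0 : (0:ℝ) ≤ (T.numChildren ([] : List ℕ) : ℝ) := Nat.cast_nonneg _
    rw [RTree.conductance]
    calc lam * (T.numChildren ([] : List ℕ) : ℝ) * T.escProb lam
        ≤ lam * (m:ℝ) * max 0 (1 - 1/(((m:ℝ)-1)*lam)) := by
          have h1 : lam * (T.numChildren ([] : List ℕ) : ℝ) ≤ lam * (m:ℝ) :=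
            mul_le_mul_of_nonneg_left hroot hlam.1.le
          exact mul_le_mul h1 hesc hesc0
            (mul_nonneg hlam.1.le (Nat.cast_nonneg m))
      _ = (m:ℝ) * max 0 (lam - 1/((m:ℝ)-1)) := RTreeAux.algebra_max m hm2 hlam.1
end
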